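/- arXiv:1002.2124 — 7 statements merged into one kernel-verified Lean document; each statement's English description precedes it below -/
import Mathlib

section
/- For every real α > 0, every m ∈ ℕ, and every real t ≥ 0, one has ∑_{n=0}^∞ (E_α^{(m+n)}(−t) / n!) · t^n = E_α^{(m)}(0) = m! / Γ(αm+1). -/
open MeasureTheory Complex

/-- The Mittag-Leffler function `E_α(z) = ∑ₙ zⁿ / Γ(αn+1)`. -/
noncomputable def mittagLeffler (α : ℝ) (z : ℂ) : ℂ :=
  ∑' n : ℕ, z ^ n / (Real.Gamma (α * n + 1) : ℂ)

open Filter Topology FormalMultilinearSeries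

/-- The coefficients of the Mittag-Leffler series decay faster than any geometric rate. -/
lemma mittagLeffler_coeff_tendsto (α : ℝ) (hα : 0 < α) (r : ℝ) (hr : 0 ≤ r) :
    Tendsto (fun n : ℕ => (Real.Gamma (α * n + 1))⁻¹ * r ^ n) atTop (𝓝 0) := by
  set q : ℕ := ⌈1 / α⌉₊ + 1 with hq_def
  have hq : 0 < q := Nat.succ_pos _
  have hαq : 1 ≤ α * q := by
    have h1 : (1 : ℝ) / α ≤ q := (Nat.le_ceil _).trans (by exact_mod_cast Nat.le_succ _)
    calc (1 : ℝ) = α * (1 / α) := by field_simp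
    _ ≤ α * q := by gcongr
  set s : ℝ := max r 1 with hs_def
  have hs1 : (1 : ℝ) ≤ s := le_max_right _ _
  have hrs : r ≤ s := le_max_left _ _
  set B : ℝ := s ^ q with hB_def
  have hB1 : (1 : ℝ) ≤ B := one_le_pow₀ hs1
  have hlim : Tendsto (fun j : ℕ => B * (B ^ j / (j.factorial : ℝ))) atTop (𝓝 0) := by
    have := (FloorSemiring.tendsto_pow_div_factorial_atTop (K := ℝ) B).const_mul B
    simpa using this
  have hdiv : Tendsto (fun n : ℕ => n / q) atTop atTop := by
    refine tendsto_atTop_atTop.2 fun b => ⟨q * b, fun n hn => ?_⟩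
    exact (Nat.le_div_iff_mul_le hq).2 (by rw [Nat.mul_comm]; exact hn)
  have hcomp : Tendsto (fun n : ℕ => B * (B ^ (n / q) / ((n / q).factorial : ℝ))) atTop (𝓝 0) :=
    hlim.comp hdiv
  refine squeeze_zero_norm' ?_ hcomp
  filter_upwards [eventually_ge_atTop q] with n hn
  have hαn : 1 ≤ α * n := le_trans hαq (mul_le_mul_of_nonneg_left (by exact_mod_cast hn) hα.le)
  have hΓpos : 0 < Real.Gamma (α * n + 1) :=
    Real.Gamma_pos_of_pos (by positivity)
  -- `Γ(αn+1) ≥ ⌊αn⌋!`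
  have hfl1 : (1 : ℕ) ≤ ⌊α * n⌋₊ := Nat.le_floor (by exact_mod_cast hαn)
  have hmono := Real.Gamma_strictMonoOn_Ici.monotoneOn
  have hΓ1 : Real.Gamma ((⌊α * n⌋₊ : ℝ) + 1) ≤ Real.Gamma (α * n + 1) := by
    apply hmono
    · simp only [Set.mem_Ici]
      have : (1 : ℝ) ≤ (⌊α * n⌋₊ : ℝ) := by exact_mod_cast hfl1
      linarith
    · simp only [Set.mem_Ici]; linarith
    · have := Nat.floor_le (by positivity : (0:ℝ) ≤ α * n)
      linarith
  have hΓfact : ((⌊α * n⌋₊).factorial : ℝ) ≤ Real.Gamma (α * n + 1) := by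
    rw [← Real.Gamma_nat_eq_factorial]
    exact_mod_cast hΓ1
  -- `n / q ≤ ⌊αn⌋`
  have hndq : n / q ≤ ⌊α * n⌋₊ := by
    apply Nat.le_floor
    calc ((n / q : ℕ) : ℝ) ≤ (n : ℝ) / q := Nat.cast_div_le
    _ = (1 / q) * n := by ring
    _ ≤ α * n := by
        apply mul_le_mul_of_nonneg_right _ (Nat.cast_nonneg n)
        rw [div_le_iff₀ (by positivity)]
        linarith [hαq]
  have hfactle : ((n / q).factorial : ℝ) ≤ Real.Gamma (α * n + 1) :=
    le_trans (by exact_mod_cast Nat.factorial_le hndq) hΓfact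
  have hfactpos : (0 : ℝ) < ((n / q).factorial : ℝ) := by positivity
  -- `r ^ n ≤ B ^ (n/q + 1)`
  have hrn : r ^ n ≤ B ^ (n / q + 1) := by
    calc r ^ n ≤ s ^ n := pow_le_pow_left₀ hr hrs n
    _ ≤ s ^ (q * (n / q + 1)) := by
        apply pow_le_pow_right₀ hs1
        calc n = q * (n / q) + n % q := (Nat.div_add_mod n q).symm
        _ ≤ q * (n / q) + q := Nat.add_le_add_left (Nat.mod_lt n hq).le _
        _ = q * (n / q + 1) := (Nat.mul_succ q _).symm
    _ = B ^ (n / q + 1) := by rw [hB_def, ← pow_mul]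
  have hterm : (Real.Gamma (α * n + 1))⁻¹ * r ^ n
      ≤ B * (B ^ (n / q) / ((n / q).factorial : ℝ)) := by
    have h1 : (Real.Gamma (α * n + 1))⁻¹ ≤ (((n / q).factorial : ℝ))⁻¹ :=
      inv_anti₀ hfactpos hfactle
    calc (Real.Gamma (α * n + 1))⁻¹ * r ^ n
        ≤ (((n / q).factorial : ℝ))⁻¹ * B ^ (n / q + 1) := by
          apply mul_le_mul h1 hrn (by positivity) (by positivity)
    _ = B * (B ^ (n / q) / ((n / q).factorial : ℝ)) := by
          rw [pow_succ]; field_simp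
  have hnonneg : 0 ≤ (Real.Gamma (α * n + 1))⁻¹ * r ^ n := by positivity
  rwa [Real.norm_eq_abs, _root_.abs_of_nonneg hnonneg]

/-- The formal power series of the Mittag-Leffler function. -/
noncomputable def mittagLefflerSeries (α : ℝ) : FormalMultilinearSeries ℂ ℂ ℂ :=
  ofScalars ℂ (fun n => ((Real.Gamma (α * n + 1) : ℂ))⁻¹)

lemma mittagLefflerSeries_radius (α : ℝ) (hα : 0 < α) :
    (mittagLefflerSeries α).radius = ⊤ := by
  apply ENNReal.eq_top_of_forall_nnreal_le
  intro r
  apply FormalMultilinearSeries.le_radius_of_tendsto (l := 0)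
  have h := mittagLeffler_coeff_tendsto α hα r r.coe_nonneg
  refine h.congr fun n => ?_
  have hΓpos : 0 < Real.Gamma (α * n + 1) :=
    Real.Gamma_pos_of_pos (by positivity)
  rw [mittagLefflerSeries, ofScalars_norm]
  congr 1
  rw [norm_inv, Complex.norm_real, Real.norm_eq_abs, abs_of_pos hΓpos]

lemma mittagLeffler_eq_sum (α : ℝ) :
    mittagLeffler α = (mittagLefflerSeries α).sum := by
  funext z
  rw [FormalMultilinearSeries.sum, mittagLeffler]
  congr 1
  funext n
  rw [mittagLefflerSeries, ofScalars_apply_eq, smul_eq_mul, div_eq_mul_inv, mul_comm]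

lemma mittagLeffler_hasFPowerSeries (α : ℝ) (hα : 0 < α) :
    HasFPowerSeriesOnBall (mittagLeffler α) (mittagLefflerSeries α) 0 ⊤ := by
  rw [mittagLeffler_eq_sum α]
  have h := (mittagLefflerSeries α).hasFPowerSeriesOnBall
    (by rw [mittagLefflerSeries_radius α hα]; exact ENNReal.zero_lt_top)
  rwa [mittagLefflerSeries_radius α hα] at h

lemma mittagLeffler_differentiable (α : ℝ) (hα : 0 < α) :
    Differentiable ℂ (mittagLeffler α) := fun z => by
  have := (mittagLeffler_hasFPowerSeries α hα).analyticAt_of_mem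
    (by simp [Metric.mem_eball, edist_lt_top] : z ∈ Metric.eball (0 : ℂ) ⊤)
  exact this.differentiableAt

lemma entire_iteratedDeriv {f : ℂ → ℂ} (hf : Differentiable ℂ f) (n : ℕ) :
    Differentiable ℂ (iteratedDeriv n f) := by
  induction n with
  | zero => simpa [iteratedDeriv_zero] using hf
  | succ k ih =>
    rw [iteratedDeriv_succ]
    have := (analyticOnNhd_univ_iff_differentiable.mpr ih).deriv
    exact analyticOnNhd_univ_iff_differentiable.mp this

lemma iteratedDeriv_iteratedDeriv {f : ℂ → ℂ} (m n : ℕ) :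
    iteratedDeriv n (iteratedDeriv m f) = iteratedDeriv (m + n) f := by
  simp only [iteratedDeriv_eq_iterate]
  rw [add_comm m n, Function.iterate_add_apply]

lemma mittagLeffler_iteratedDeriv_zero (α : ℝ) (hα : 0 < α) (m : ℕ) :
    iteratedDeriv m (mittagLeffler α) 0
      = (Nat.factorial m : ℂ) / (Real.Gamma (α * m + 1) : ℂ) := by
  have h := (mittagLeffler_hasFPowerSeries α hα).factorial_smul (1 : ℂ) m
  rw [iteratedDeriv_eq_iteratedFDeriv, ← h, mittagLefflerSeries, ofScalars_apply_eq]
  simp only [smul_eq_mul, one_pow, mul_one, nsmul_eq_mul]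
  rw [div_eq_mul_inv]

/-- For every `α > 0`, `m : ℕ` and real `t ≥ 0`,
`∑ₙ (E_α⁽ᵐ⁺ⁿ⁾(−t)/n!) tⁿ = E_α⁽ᵐ⁾(0) = m! / Γ(αm+1)`. -/
theorem mittagLeffler_shifted_taylor_sum (α : ℝ) (hα : 0 < α) (m : ℕ) (t : ℝ) (ht : 0 ≤ t) :
    HasSum
      (fun n : ℕ =>
        iteratedDeriv (m + n) (mittagLeffler α) (-(t : ℂ)) / (Nat.factorial n : ℂ) * (t : ℂ) ^ n)
      ((Nat.factorial m : ℂ) / (Real.Gamma (α * m + 1) : ℂ)) ∧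
    iteratedDeriv m (mittagLeffler α) 0 = (Nat.factorial m : ℂ) / (Real.Gamma (α * m + 1) : ℂ) := by
  have hD := mittagLeffler_differentiable α hα
  have hg : Differentiable ℂ (iteratedDeriv m (mittagLeffler α)) := entire_iteratedDeriv hD m
  have hzero := mittagLeffler_iteratedDeriv_zero α hα m
  refine ⟨?_, hzero⟩
  have hT := Complex.hasSum_taylorSeries_of_entire hg (-(t : ℂ)) 0
  have heq : (fun n : ℕ =>
      (n.factorial : ℂ)⁻¹ • ((0 : ℂ) - (-(t : ℂ))) ^ n • iteratedDeriv n (iteratedDeriv m (mittagLeffler α)) (-(t : ℂ)))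
      = fun n : ℕ =>
        iteratedDeriv (m + n) (mittagLeffler α) (-(t : ℂ)) / (Nat.factorial n : ℂ) * (t : ℂ) ^ n := by
    funext n
    rw [iteratedDeriv_iteratedDeriv]
    simp only [smul_eq_mul, zero_sub, neg_neg]
    rw [div_eq_mul_inv]
    ring
  rw [heq] at hT
  rwa [hzero] at hT
end

section
/- Let 0 < α < 1 and let ν be a probability measure on [0,∞) such that E_α(−t) = ∫_0^∞ e^{−tτ} dν(τ) for all real t ≥ 0. Then for every n ∈ ℕ the function τ ↦ τ^n is ν-integrable and the moments of ν are given by ∫_0^∞ τ^n dν(τ) = n! / Γ(αn+1). -/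
open MeasureTheory Complex


noncomputable def mlP (N : ℕ) (x : ℝ) : ℝ :=
  ∑ k ∈ Finset.range N, (-1 : ℝ) ^ k / (Nat.factorial k) * x ^ k

noncomputable def mlR (N : ℕ) (x : ℝ) : ℝ :=
  (-1 : ℝ) ^ N * (Real.exp (-x) - mlP N x)

lemma mlP_hasDerivAt (N : ℕ) (x : ℝ) :
    HasDerivAt (mlP (N + 1)) (-(mlP N x)) x := by
  have h : ∀ k ∈ Finset.range (N + 1),
      HasDerivAt (fun y : ℝ => (-1 : ℝ) ^ k / (Nat.factorial k) * y ^ k)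
        ((-1 : ℝ) ^ k / (Nat.factorial k) * (k * x ^ (k - 1))) x := by
    intro k _
    exact (hasDerivAt_pow k x).const_mul _
  have h2 := HasDerivAt.sum h
  have h3 : ∑ k ∈ Finset.range (N + 1),
      (-1 : ℝ) ^ k / (Nat.factorial k) * (k * x ^ (k - 1)) = -(mlP N x) := by
    rw [Finset.sum_range_succ']
    simp only [mlP, Nat.factorial_succ]
    push_cast
    rw [← Finset.sum_neg_distrib]
    simp only [pow_zero, Nat.factorial_zero, Nat.cast_one, zero_mul, mul_zero, add_zero]
    apply Finset.sum_congr rfl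
    intro k _
    have hk : (Nat.factorial k : ℝ) ≠ 0 := Nat.cast_ne_zero.2 (Nat.factorial_ne_zero k)
    have hk1 : (k : ℝ) + 1 ≠ 0 := by positivity
    field_simp
    ring
  rw [← h3]
  have e : mlP (N + 1) = ∑ i ∈ Finset.range (N + 1), fun y : ℝ => (-1 : ℝ) ^ i / (Nat.factorial i) * y ^ i := by
    funext y; rw [Finset.sum_apply]; rfl
  rw [e]; exact h2

lemma mlR_hasDerivAt (N : ℕ) (x : ℝ) :
    HasDerivAt (mlR (N + 1)) (mlR N x) x := by
  have he : HasDerivAt (fun y : ℝ => Real.exp (-y)) (-Real.exp (-x)) x := by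
    simpa [Function.comp_def] using (Real.hasDerivAt_exp (-x)).comp x (hasDerivAt_neg x)
  have h := ((he.sub (mlP_hasDerivAt N x)).const_mul ((-1 : ℝ) ^ (N + 1)))
  have : (-1 : ℝ) ^ (N + 1) * (-Real.exp (-x) - -(mlP N x)) = mlR N x := by
    simp only [mlR, pow_succ]
    ring
  rw [← this]
  exact h

lemma mlR_bounds : ∀ (N : ℕ) (x : ℝ), 0 ≤ x →
    Real.exp (-x) * x ^ N / (Nat.factorial N) ≤ mlR N x ∧
      mlR N x ≤ x ^ N / (Nat.factorial N) := by
  intro N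
  induction N with
  | zero =>
    intro x hx
    simp only [mlR, mlP, pow_zero, one_mul, Finset.range_zero, Finset.sum_empty, sub_zero,
      Nat.factorial_zero, Nat.cast_one, div_one]
    exact ⟨by simp, Real.exp_le_one_iff.2 (by linarith)⟩
  | succ N ih =>
    have hR0 : mlR (N + 1) 0 = 0 := by
      simp only [mlR, mlP]
      rw [Finset.sum_range_succ']
      simp
    -- upper bound function
    intro x hx
    constructor
    · -- lower bound: l x = mlR (N+1) x - exp(-x)*x^(N+1)/(N+1)!
      set l : ℝ → ℝ := fun y => mlR (N + 1) y - Real.exp (-y) * y ^ (N + 1) / (Nat.factorial (N + 1)) with hl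
      have hld : ∀ y : ℝ, HasDerivAt l
          (mlR N y - (-Real.exp (-y) * y ^ (N + 1) + Real.exp (-y) * ((N + 1) * y ^ N)) / (Nat.factorial (N + 1))) y := by
        intro y
        have he : HasDerivAt (fun z : ℝ => Real.exp (-z)) (-Real.exp (-y)) y := by
          simpa [Function.comp_def] using (Real.hasDerivAt_exp (-y)).comp y (hasDerivAt_neg y)
        have hp : HasDerivAt (fun z : ℝ => z ^ (N + 1)) ((N + 1) * y ^ N) y := by
          simpa using hasDerivAt_pow (N + 1) y
        exact (mlR_hasDerivAt N y).sub ((he.mul hp).div_const _)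
      have hderiv_nonneg : ∀ y : ℝ, 0 ≤ y → 0 ≤ mlR N y - (-Real.exp (-y) * y ^ (N + 1) + Real.exp (-y) * ((N + 1) * y ^ N)) / (Nat.factorial (N + 1)) := by
        intro y hy
        have h1 := (ih y hy).1
        have hfact : (Nat.factorial (N + 1) : ℝ) = (N + 1) * Nat.factorial N := by
          rw [Nat.factorial_succ]; push_cast; ring
        have hNf : (0:ℝ) < Nat.factorial N := by positivity
        have hterm : Real.exp (-y) * ((N + 1) * y ^ N) / (Nat.factorial (N + 1)) = Real.exp (-y) * y ^ N / Nat.factorial N := by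
          rw [hfact]; field_simp
        have h2 : (0:ℝ) ≤ Real.exp (-y) * y ^ (N + 1) / (Nat.factorial (N + 1)) := by positivity
        have : mlR N y - (-Real.exp (-y) * y ^ (N + 1) + Real.exp (-y) * ((N + 1) * y ^ N)) / (Nat.factorial (N + 1))
            = (mlR N y - Real.exp (-y) * y ^ N / Nat.factorial N) + Real.exp (-y) * y ^ (N + 1) / (Nat.factorial (N + 1)) := by
          rw [← hterm]; ring
        rw [this]
        have := sub_nonneg.2 h1
        linarith
      have hmono : MonotoneOn l (Set.Ici 0) := by
        apply monotoneOn_of_deriv_nonneg (convex_Ici 0)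
        · exact fun y _ => ((hld y).continuousAt).continuousWithinAt
        · intro y hy
          exact ((hld y).differentiableAt).differentiableWithinAt
        · intro y hy
          rw [interior_Ici] at hy
          rw [(hld y).deriv]
          exact hderiv_nonneg y (le_of_lt hy)
      have h0 : l 0 = 0 := by simp [hl, hR0]
      have := hmono (Set.self_mem_Ici) (Set.mem_Ici.2 hx) hx
      rw [h0] at this
      simpa [hl, sub_nonneg] using this
    · -- upper bound: g x = x^(N+1)/(N+1)! - mlR (N+1) x
      set g : ℝ → ℝ := fun y => y ^ (N + 1) / (Nat.factorial (N + 1)) - mlR (N + 1) y with hg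
      have hgd : ∀ y : ℝ, HasDerivAt g ((N + 1) * y ^ N / (Nat.factorial (N + 1)) - mlR N y) y := by
        intro y
        have hp : HasDerivAt (fun z : ℝ => z ^ (N + 1)) ((N + 1) * y ^ N) y := by
          simpa using hasDerivAt_pow (N + 1) y
        exact (hp.div_const _).sub (mlR_hasDerivAt N y)
      have hderiv_nonneg : ∀ y : ℝ, 0 ≤ y → 0 ≤ (N + 1) * y ^ N / (Nat.factorial (N + 1)) - mlR N y := by
        intro y hy
        have h1 := (ih y hy).2
        have hfact : (Nat.factorial (N + 1) : ℝ) = (N + 1) * Nat.factorial N := by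
          rw [Nat.factorial_succ]; push_cast; ring
        have hNf : (0:ℝ) < Nat.factorial N := by positivity
        have : ((N:ℝ) + 1) * y ^ N / (Nat.factorial (N + 1)) = y ^ N / Nat.factorial N := by
          rw [hfact]; field_simp
        rw [this]
        linarith
      have hmono : MonotoneOn g (Set.Ici 0) := by
        apply monotoneOn_of_deriv_nonneg (convex_Ici 0)
        · exact fun y _ => ((hgd y).continuousAt).continuousWithinAt
        · intro y hy
          exact ((hgd y).differentiableAt).differentiableWithinAt
        · intro y hy
          rw [interior_Ici] at hy
          rw [(hgd y).deriv]
          exact hderiv_nonneg y (le_of_lt hy)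
      have h0 : g 0 = 0 := by simp [hg, hR0]
      have := hmono (Set.self_mem_Ici) (Set.mem_Ici.2 hx) hx
      rw [h0] at this
      simpa [hg, sub_nonneg] using this

lemma gamma_ge_one {y : ℝ} (hy : 2 ≤ y) : 1 ≤ Real.Gamma y := by
  rcases eq_or_lt_of_le hy with h | h
  · rw [← h, Real.Gamma_two]
  · have hcv := Real.convexOn_Gamma
    set a : ℝ := (y - 2) / (y - 1) with ha
    set b : ℝ := 1 / (y - 1) with hb
    have hy1 : (1:ℝ) < y := by linarith
    have hy1' : y - 1 ≠ 0 := by intro hc; linarith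
    have hab : a + b = 1 := by rw [ha, hb, ← add_div, div_eq_one_iff_eq hy1']; ring
    have ha0 : 0 ≤ a := by
      apply div_nonneg <;> linarith
    have hb0 : 0 < b := by
      apply div_pos <;> linarith
    have hmem1 : (1:ℝ) ∈ Set.Ioi (0:ℝ) := by norm_num
    have hmemy : y ∈ Set.Ioi (0:ℝ) := by simp only [Set.mem_Ioi]; linarith
    have hpt : a • (1:ℝ) + b • y = 2 := by
      simp only [smul_eq_mul, mul_one, ha, hb]
      rw [div_mul_eq_mul_div, ← add_div, div_eq_iff hy1']
      ring
    have := hcv.2 hmem1 hmemy ha0 (le_of_lt hb0) hab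
    rw [hpt, Real.Gamma_two, Real.Gamma_one, smul_eq_mul, smul_eq_mul, mul_one] at this
    -- 1 ≤ a + b * Gamma y, a + b = 1
    nlinarith
lemma gamma_ge_sixth {x : ℝ} (hx : 1 ≤ x) : (1/6 : ℝ) ≤ Real.Gamma x := by
  rcases le_or_gt 2 x with h | h
  · linarith [gamma_ge_one h]
  · have hx0 : x ≠ 0 := by linarith
    have hx1 : x + 1 ≠ 0 := by linarith
    have h2 : Real.Gamma (x + 1 + 1) = (x + 1) * (x * Real.Gamma x) := by
      rw [Real.Gamma_add_one hx1, Real.Gamma_add_one hx0]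
    have h3 : 1 ≤ Real.Gamma (x + 1 + 1) := gamma_ge_one (by linarith)
    rw [h2] at h3
    have hΓ : 0 < Real.Gamma x := Real.Gamma_pos_of_pos (by linarith)
    have h6 : (x + 1) * x ≤ 6 := by nlinarith
    have := mul_le_mul_of_nonneg_right h6 hΓ.le
    nlinarith

lemma gamma_ml_pos {α : ℝ} (hα : 0 < α) (k : ℕ) : 0 < Real.Gamma (α * k + 1) :=
  Real.Gamma_pos_of_pos (by positivity)

lemma gamma_ml_ge {α : ℝ} (hα : 0 < α) (k : ℕ) : (1/6 : ℝ) ≤ Real.Gamma (α * k + 1) :=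
  gamma_ge_sixth (by nlinarith [Nat.cast_nonneg (α := ℝ) k])

lemma ml_term_bound {α : ℝ} (hα : 0 < α) (t : ℝ) (k : ℕ) :
    |(-t) ^ k / Real.Gamma (α * k + 1)| ≤ 6 * |t| ^ k := by
  rw [abs_div, _root_.abs_pow, abs_neg, _root_.abs_of_pos (gamma_ml_pos hα k)]
  rw [div_le_iff₀ (gamma_ml_pos hα k)]
  calc |t| ^ k = 6 * |t| ^ k * (1/6) := by ring
  _ ≤ 6 * |t| ^ k * Real.Gamma (α * k + 1) := by
      apply mul_le_mul_of_nonneg_left (gamma_ml_ge hα k) (by positivity)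

lemma ml_summable {α : ℝ} (hα : 0 < α) {t : ℝ} (ht : |t| < 1) :
    Summable (fun k : ℕ => (-t) ^ k / Real.Gamma (α * k + 1)) := by
  apply Summable.of_abs
  apply Summable.of_nonneg_of_le (fun k => abs_nonneg _) (fun k => ml_term_bound hα t k)
  exact (summable_geometric_of_lt_one (abs_nonneg t) ht).mul_left 6

lemma ml_term_bound' {x : ℝ} (hx : 1 ≤ x) (t : ℝ) (j : ℕ) :
    |(-t) ^ j / Real.Gamma x| ≤ 6 * |t| ^ j := by
  have hpos : 0 < Real.Gamma x := Real.Gamma_pos_of_pos (by linarith)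
  rw [abs_div, _root_.abs_pow, abs_neg, _root_.abs_of_pos hpos, div_le_iff₀ hpos]
  calc |t| ^ j = 6 * |t| ^ j * (1/6) := by ring
  _ ≤ 6 * |t| ^ j * Real.Gamma x := by
      apply mul_le_mul_of_nonneg_left (gamma_ge_sixth hx) (by positivity)

lemma ml_arg_ge {α : ℝ} (hα : 0 < α) (m : ℕ) : (1:ℝ) ≤ α * m + 1 := by
  nlinarith [Nat.cast_nonneg (α := ℝ) m]

lemma ml_B_summable {α : ℝ} (hα : 0 < α) (N : ℕ) {t : ℝ} (ht : |t| < 1) :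
    Summable (fun j : ℕ => (-t) ^ j / Real.Gamma (α * (j + N) + 1)) := by
  apply Summable.of_abs
  apply Summable.of_nonneg_of_le (fun k => abs_nonneg _)
    (fun j => ?_)
  · exact (summable_geometric_of_lt_one (abs_nonneg t) ht).mul_left 6
  · have := ml_term_bound' (ml_arg_ge hα (j + N)) t j
    push_cast at this
    exact this

lemma ml_split {α : ℝ} (hα : 0 < α) (N : ℕ) {t : ℝ} (ht : |t| < 1) :
    (∑' k : ℕ, (-t) ^ k / Real.Gamma (α * k + 1))
      - ∑ k ∈ Finset.range N, (-t) ^ k / Real.Gamma (α * k + 1)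
      = (-t) ^ N * ∑' j : ℕ, (-t) ^ j / Real.Gamma (α * (j + N) + 1) := by
  have hs := ml_summable hα ht
  have h := Summable.sum_add_tsum_nat_add (f := fun k : ℕ => (-t) ^ k / Real.Gamma (α * k + 1)) N hs
  have h' : (∑' k : ℕ, (-t) ^ k / Real.Gamma (α * k + 1))
      - ∑ k ∈ Finset.range N, (-t) ^ k / Real.Gamma (α * k + 1)
      = ∑' j : ℕ, (-t) ^ (j + N) / Real.Gamma (α * ((j : ℕ) + N : ℕ) + 1) := by
    rw [← h]; ring
  rw [h', ← tsum_mul_left]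
  congr 1 with j
  push_cast
  rw [pow_add]
  ring

lemma ml_B_bound {α : ℝ} (hα : 0 < α) (N : ℕ) {t : ℝ} (ht0 : 0 ≤ t) (ht : t ≤ 1/2) :
    |(∑' j : ℕ, (-t) ^ j / Real.Gamma (α * (j + N) + 1)) - 1 / Real.Gamma (α * N + 1)|
      ≤ 12 * t := by
  have habs : |t| < 1 := by rw [_root_.abs_of_nonneg ht0]; linarith
  have hs := ml_B_summable hα N habs
  have h := Summable.sum_add_tsum_nat_add (f := fun j : ℕ => (-t) ^ j / Real.Gamma (α * (j + N) + 1)) 1 hs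
  have h0 : ∑ j ∈ Finset.range 1, (-t) ^ j / Real.Gamma (α * (j + N) + 1)
      = 1 / Real.Gamma (α * N + 1) := by
    simp
  rw [h0] at h
  have heq : (∑' j : ℕ, (-t) ^ j / Real.Gamma (α * (j + N) + 1)) - 1 / Real.Gamma (α * N + 1)
      = ∑' j : ℕ, (-t) ^ (j + 1) / Real.Gamma (α * ((j : ℝ) + 1 + N) + 1) := by
    rw [← h]
    push_cast
    ring
  rw [heq]
  have hgeo : HasSum (fun j : ℕ => 6 * |t| * |t| ^ j) (6 * |t| * (1 - |t|)⁻¹) :=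
    (hasSum_geometric_of_lt_one (abs_nonneg t) habs).mul_left _
  have hbnd : ∀ j : ℕ, ‖(-t) ^ (j + 1) / Real.Gamma (α * ((j : ℝ) + 1 + N) + 1)‖ ≤ 6 * |t| * |t| ^ j := by
    intro j
    have harg : (1:ℝ) ≤ α * ((j : ℝ) + 1 + N) + 1 := by
      have := ml_arg_ge hα (j + 1 + N)
      push_cast at this
      linarith
    have hpos : 0 < Real.Gamma (α * ((j : ℝ) + 1 + N) + 1) := Real.Gamma_pos_of_pos (by linarith)
    rw [Real.norm_eq_abs, abs_div, _root_.abs_pow, abs_neg, _root_.abs_of_pos hpos, div_le_iff₀ hpos]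
    calc |t| ^ (j + 1) = 6 * |t| * |t| ^ j * (1/6) := by rw [pow_succ]; ring
    _ ≤ 6 * |t| * |t| ^ j * Real.Gamma (α * ((j : ℝ) + 1 + N) + 1) := by
        apply mul_le_mul_of_nonneg_left (gamma_ge_sixth harg) (by positivity)
  have hb := tsum_of_norm_bounded hgeo hbnd
  refine hb.trans ?_
  rw [_root_.abs_of_nonneg ht0]
  have h1 : (1 - t)⁻¹ ≤ 2 := by
    rw [inv_le_iff_one_le_mul₀ (by linarith)]
    linarith
  calc 6 * t * (1 - t)⁻¹ ≤ 6 * t * 2 := by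
        apply mul_le_mul_of_nonneg_left h1 (by positivity)
    _ = 12 * t := by ring

/-- Let `0 < α < 1` and let `ν` be a probability measure on `[0,∞)` (a probability measure
on `ℝ` giving no mass to `(-∞,0)`) such that `E_α(−t) = ∫ e^{−tτ} dν(τ)` for all `t ≥ 0`.
Then for every `n` the function `τ ↦ τⁿ` is `ν`-integrable and
`∫ τⁿ dν(τ) = n! / Γ(αn+1)`. -/
theorem moments_of_mittagLeffler_representing_measure
    (α : ℝ) (hα₁ : 0 < α) (hα₂ : α < 1)
    (ν : Measure ℝ) [IsProbabilityMeasure ν] (hsupp : ν (Set.Iio 0) = 0)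
    (hrep : ∀ t : ℝ, 0 ≤ t →
      mittagLeffler α (-(t : ℂ)) = ∫ τ, Complex.exp (-(t : ℂ) * (τ : ℂ)) ∂ν)
    (n : ℕ) :
    Integrable (fun τ : ℝ => τ ^ n) ν ∧
      ∫ τ, τ ^ n ∂ν = (Nat.factorial n : ℝ) / Real.Gamma (α * n + 1) := by
  have hae : ∀ᵐ τ ∂ν, (0:ℝ) ≤ τ := by
    have hset : {τ : ℝ | ¬ (0:ℝ) ≤ τ} = Set.Iio 0 := by ext τ; simp [not_le]
    rw [MeasureTheory.ae_iff, hset]; exact hsupp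
  have hexp_cont : ∀ t : ℝ, Continuous fun τ : ℝ => Real.exp (-(t*τ)) :=
    fun t => Real.continuous_exp.comp ((continuous_const.mul continuous_id).neg)
  have hexp_int : ∀ t : ℝ, 0 ≤ t → Integrable (fun τ => Real.exp (-(t*τ))) ν := by
    intro t ht
    refine (integrable_const (1:ℝ)).mono' ((hexp_cont t).aestronglyMeasurable) ?_
    filter_upwards [hae] with τ hτ
    rw [Real.norm_eq_abs, _root_.abs_of_pos (Real.exp_pos _)]
    exact Real.exp_le_one_iff.2 (by nlinarith)
  have hrepR : ∀ t : ℝ, 0 ≤ t →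
      (∑' k : ℕ, (-t)^k / Real.Gamma (α * k + 1)) = ∫ τ, Real.exp (-(t*τ)) ∂ν := by
    intro t ht
    have h := hrep t ht
    have hL : mittagLeffler α (-(t:ℂ)) = ((∑' k : ℕ, (-t)^k / Real.Gamma (α * k + 1) : ℝ) : ℂ) := by
      rw [mittagLeffler, Complex.ofReal_tsum]
      congr 1 with k
      rw [Complex.ofReal_div, Complex.ofReal_pow, Complex.ofReal_neg]
    have hR : (∫ τ, Complex.exp (-(t:ℂ) * τ) ∂ν) = ((∫ τ, Real.exp (-(t*τ)) ∂ν : ℝ) : ℂ) := by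
      have heq : (fun τ : ℝ => Complex.exp (-(t:ℂ) * (τ:ℂ)))
          = fun τ : ℝ => ((Real.exp (-(t*τ)) : ℝ) : ℂ) := by
        funext τ
        rw [Complex.ofReal_exp]
        norm_cast
        rw [neg_mul]
      rw [heq]
      exact integral_ofReal
    rw [hL, hR] at h
    exact_mod_cast h
  induction n using Nat.strong_induction_on with
  | _ N IH =>
  have hintk : ∀ k, k < N → Integrable (fun τ : ℝ => τ^k) ν := fun k hk => (IH k hk).1
  have hvalk : ∀ k, k < N → ∫ τ, τ^k ∂ν = (Nat.factorial k : ℝ) / Real.Gamma (α*k+1) :=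
    fun k hk => (IH k hk).2
  have hNf : (0:ℝ) < Nat.factorial N := by positivity
  have hΓpos : 0 < Real.Gamma (α * N + 1) := gamma_ml_pos hα₁ N
  have h_eu : ∀ u : ℝ, 0 ≤ u → Real.exp (-u) * u ^ N ≤ (Nat.factorial N : ℝ) := by
    intro v hv
    have h1 : v ^ N / (Nat.factorial N : ℝ) ≤ Real.exp v :=
      Real.pow_div_factorial_le_exp (x := v) hv N
    rw [div_le_iff₀ hNf] at h1
    have h2 := Real.exp_pos v
    rw [Real.exp_neg, inv_mul_le_iff₀ h2]
    nlinarith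
  have hIexp : ∀ t : ℝ, 0 < t → Integrable (fun τ : ℝ => Real.exp (-(t*τ)) * τ^N) ν := by
    intro t ht
    refine (integrable_const ((Nat.factorial N : ℝ)/t^N)).mono'
      (((hexp_cont t).mul (continuous_pow N)).aestronglyMeasurable) ?_
    filter_upwards [hae] with τ hτ
    rw [Real.norm_eq_abs, _root_.abs_of_nonneg (by positivity)]
    have h := h_eu (t*τ) (by positivity)
    rw [mul_pow] at h
    rw [le_div_iff₀ (by positivity : (0:ℝ) < t^N)]
    nlinarith [Real.exp_pos (-(t*τ))]
  have hPint : ∀ t : ℝ, Integrable (fun τ : ℝ => mlP N (t*τ)) ν := by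
    intro t
    simp only [mlP]
    apply integrable_finset_sum
    intro k hk
    have hk' : k < N := Finset.mem_range.1 hk
    have heq : (fun τ : ℝ => (-1:ℝ)^k / (Nat.factorial k) * (t*τ)^k)
        = fun τ : ℝ => ((-1:ℝ)^k * t^k / (Nat.factorial k)) * τ^k := by
      funext τ; rw [mul_pow]; ring
    rw [heq]
    exact (hintk k hk').const_mul _
  have hPval : ∀ t : ℝ, ∫ τ, mlP N (t*τ) ∂ν
      = ∑ k ∈ Finset.range N, (-t)^k / Real.Gamma (α*k+1) := by
    intro t
    simp only [mlP]
    rw [integral_finset_sum]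
    · apply Finset.sum_congr rfl
      intro k hk
      have hk' : k < N := Finset.mem_range.1 hk
      have heq : (fun τ : ℝ => (-1:ℝ)^k / (Nat.factorial k) * (t*τ)^k)
          = fun τ : ℝ => ((-1:ℝ)^k * t^k / (Nat.factorial k)) * τ^k := by
        funext τ; rw [mul_pow]; ring
      rw [heq, integral_const_mul, hvalk k hk']
      have hkf : (Nat.factorial k : ℝ) ≠ 0 := by positivity
      rw [neg_pow]
      field_simp
      ring
    · intro k hk
      have hk' : k < N := Finset.mem_range.1 hk
      have heq : (fun τ : ℝ => (-1:ℝ)^k / (Nat.factorial k) * (t*τ)^k)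
          = fun τ : ℝ => ((-1:ℝ)^k * t^k / (Nat.factorial k)) * τ^k := by
        funext τ; rw [mul_pow]; ring
      rw [heq]
      exact (hintk k hk').const_mul _
  have hRint : ∀ t : ℝ, 0 ≤ t → Integrable (fun τ : ℝ => mlR N (t*τ)) ν := by
    intro t ht
    simp only [mlR]
    exact ((hexp_int t ht).sub (hPint t)).const_mul _
  have hMid : ∀ t : ℝ, 0 ≤ t → t < 1 →
      ∫ τ, mlR N (t*τ) ∂ν = t^N * ∑' j : ℕ, (-t)^j / Real.Gamma (α * (j + N) + 1) := by
    intro t ht0 ht1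
    simp only [mlR]
    rw [integral_const_mul, integral_sub (hexp_int t ht0) (hPint t), ← hrepR t ht0, hPval t]
    have habs : |t| < 1 := by rw [_root_.abs_of_nonneg ht0]; linarith
    rw [ml_split hα₁ N habs, ← mul_assoc, ← mul_pow]
    norm_num
  have hK1 : ∀ t : ℝ, 0 < t → t < 1 →
      (∫ τ, Real.exp (-(t*τ)) * τ^N ∂ν)
        ≤ (Nat.factorial N : ℝ) * ∑' j : ℕ, (-t)^j / Real.Gamma (α * (j + N) + 1) := by
    intro t ht0 ht1
    have hlow_int : Integrable (fun τ : ℝ => Real.exp (-(t*τ)) * (t*τ)^N / (Nat.factorial N)) ν := by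
      have heq : (fun τ : ℝ => Real.exp (-(t*τ)) * (t*τ)^N / (Nat.factorial N))
          = fun τ : ℝ => (t^N/(Nat.factorial N)) * (Real.exp (-(t*τ)) * τ^N) := by
        funext τ; rw [mul_pow]; ring
      rw [heq]
      exact (hIexp t ht0).const_mul _
    have hmono := integral_mono_ae hlow_int (hRint t ht0.le) ?_
    · rw [hMid t ht0.le ht1] at hmono
      have heq : ∫ τ, Real.exp (-(t*τ)) * (t*τ)^N / (Nat.factorial N) ∂ν
          = (t^N/(Nat.factorial N)) * ∫ τ, Real.exp (-(t*τ)) * τ^N ∂ν := by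
        rw [← integral_const_mul]
        congr 1 with τ
        rw [mul_pow]; ring
      rw [heq] at hmono
      have htN : (0:ℝ) < t^N := pow_pos ht0 N
      set I := ∫ τ, Real.exp (-(t*τ)) * τ^N ∂ν
      set Bt := ∑' j : ℕ, (-t)^j / Real.Gamma (α * (j + N) + 1)
      have h1 := mul_le_mul_of_nonneg_left hmono hNf.le
      have hl : (Nat.factorial N : ℝ) * (t^N/(Nat.factorial N) * I) = t^N * I := by
        field_simp
      have h2 : t^N * I ≤ t^N * ((Nat.factorial N : ℝ) * Bt) := by
        calc t^N * I = (Nat.factorial N : ℝ) * (t^N/(Nat.factorial N) * I) := hl.symm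
          _ ≤ (Nat.factorial N : ℝ) * (t^N * Bt) := h1
          _ = t^N * ((Nat.factorial N : ℝ) * Bt) := by ring
      exact le_of_mul_le_mul_left h2 htN
    · filter_upwards [hae] with τ hτ
      exact (mlR_bounds N (t*τ) (by positivity)).1
  have hK3 : ∀ t : ℝ, 0 < t → t < 1 → Integrable (fun τ : ℝ => τ^N) ν →
      (Nat.factorial N : ℝ) * (∑' j : ℕ, (-t)^j / Real.Gamma (α * (j + N) + 1))
        ≤ ∫ τ, τ^N ∂ν := by
    intro t ht0 ht1 hint
    have hup_int : Integrable (fun τ : ℝ => (t*τ)^N / (Nat.factorial N)) ν := by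
      have heq : (fun τ : ℝ => (t*τ)^N / (Nat.factorial N))
          = fun τ : ℝ => (t^N/(Nat.factorial N)) * τ^N := by
        funext τ; rw [mul_pow]; ring
      rw [heq]
      exact hint.const_mul _
    have hmono := integral_mono_ae (hRint t ht0.le) hup_int ?_
    · rw [hMid t ht0.le ht1] at hmono
      have heq : ∫ τ, (t*τ)^N / (Nat.factorial N) ∂ν
          = (t^N/(Nat.factorial N)) * ∫ τ, τ^N ∂ν := by
        rw [← integral_const_mul]
        congr 1 with τ
        rw [mul_pow]; ring
      rw [heq] at hmono
      have htN : (0:ℝ) < t^N := pow_pos ht0 N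
      set J := ∫ τ, τ^N ∂ν
      set Bt := ∑' j : ℕ, (-t)^j / Real.Gamma (α * (j + N) + 1)
      have h1 := mul_le_mul_of_nonneg_left hmono hNf.le
      have hr : (Nat.factorial N : ℝ) * (t^N/(Nat.factorial N) * J) = t^N * J := by
        field_simp
      have h2 : t^N * ((Nat.factorial N : ℝ) * Bt) ≤ t^N * J := by
        calc t^N * ((Nat.factorial N : ℝ) * Bt) = (Nat.factorial N : ℝ) * (t^N * Bt) := by ring
          _ ≤ (Nat.factorial N : ℝ) * (t^N/(Nat.factorial N) * J) := h1
          _ = t^N * J := hr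
      exact le_of_mul_le_mul_left h2 htN
    · filter_upwards [hae] with τ hτ
      exact (mlR_bounds N (t*τ) (by positivity)).2
  set u : ℕ → ℝ := fun m => ((m:ℝ)+2)⁻¹ with hu
  have hu0 : ∀ m : ℕ, 0 < u m := by intro m; positivity
  have hu2 : ∀ m : ℕ, u m ≤ 1/2 := by
    intro m
    rw [hu]
    rw [show (1:ℝ)/2 = (2:ℝ)⁻¹ by norm_num]
    apply inv_anti₀ (by norm_num)
    have : (0:ℝ) ≤ (m:ℝ) := Nat.cast_nonneg m
    linarith
  have hu1 : ∀ m : ℕ, u m < 1 := fun m => lt_of_le_of_lt (hu2 m) (by norm_num)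
  have hulim : Filter.Tendsto u Filter.atTop (nhds 0) := by
    apply Filter.Tendsto.inv_tendsto_atTop
    exact Filter.tendsto_atTop_add_const_right _ 2 tendsto_natCast_atTop_atTop
  have hBlim : Filter.Tendsto
      (fun m => (Nat.factorial N : ℝ) * ∑' j : ℕ, (-(u m))^j / Real.Gamma (α * (j + N) + 1))
      Filter.atTop (nhds ((Nat.factorial N : ℝ) / Real.Gamma (α * N + 1))) := by
    have h1 : Filter.Tendsto
        (fun m => (∑' j : ℕ, (-(u m))^j / Real.Gamma (α * (j + N) + 1)))
        Filter.atTop (nhds (1 / Real.Gamma (α * N + 1))) := by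
      rw [← tendsto_sub_nhds_zero_iff]
      apply squeeze_zero_norm (a := fun m => 12 * u m)
      · intro m
        exact ml_B_bound hα₁ N (hu0 m).le (hu2 m)
      · simpa using hulim.const_mul (12:ℝ)
    have h2 := h1.const_mul ((Nat.factorial N : ℝ))
    simpa [div_eq_mul_inv] using h2
  have hexp_lim : ∀ τ : ℝ, Filter.Tendsto (fun m => Real.exp (-(u m * τ)) * τ^N)
      Filter.atTop (nhds (τ^N)) := by
    intro τ
    have h1 : Filter.Tendsto (fun m => -(u m * τ)) Filter.atTop (nhds 0) := by
      simpa using (hulim.mul_const τ).neg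
    have h2 : Filter.Tendsto (fun m => Real.exp (-(u m * τ))) Filter.atTop (nhds 1) := by
      simpa [Function.comp_def] using (Real.continuous_exp.tendsto 0).comp h1
    simpa using h2.mul_const (τ^N)
  have hint : Integrable (fun τ : ℝ => τ^N) ν := by
    refine ⟨(continuous_pow N).aestronglyMeasurable, ?_⟩
    have hnn : 0 ≤ᵐ[ν] fun τ : ℝ => τ^N := by
      filter_upwards [hae] with τ hτ
      positivity
    rw [hasFiniteIntegral_iff_ofReal hnn]
    set C : ℝ := (Nat.factorial N : ℝ) * (1 / Real.Gamma (α * N + 1) + 6) with hC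
    have hBC : ∀ m : ℕ, (Nat.factorial N : ℝ)
        * (∑' j : ℕ, (-(u m))^j / Real.Gamma (α * (j + N) + 1)) ≤ C := by
      intro m
      have hb := ml_B_bound hα₁ N (hu0 m).le (hu2 m)
      have h12 : 12 * u m ≤ 6 := by linarith [hu2 m]
      have hble : (∑' j : ℕ, (-(u m))^j / Real.Gamma (α * (j + N) + 1))
          ≤ 1 / Real.Gamma (α * N + 1) + 6 := by
        have := (abs_le.1 hb).2
        linarith
      exact mul_le_mul_of_nonneg_left hble hNf.le
    have hIle : ∀ m : ℕ, ∫⁻ τ, ENNReal.ofReal (Real.exp (-(u m * τ)) * τ^N) ∂ν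
        ≤ ENNReal.ofReal C := by
      intro m
      have hnn2 : 0 ≤ᵐ[ν] fun τ : ℝ => Real.exp (-(u m * τ)) * τ^N := by
        filter_upwards [hae] with τ hτ
        positivity
      rw [← ofReal_integral_eq_lintegral_ofReal (hIexp (u m) (hu0 m)) hnn2]
      exact ENNReal.ofReal_le_ofReal ((hK1 (u m) (hu0 m) (hu1 m)).trans (hBC m))
    have hmeas : ∀ m : ℕ, Measurable fun τ : ℝ => ENNReal.ofReal (Real.exp (-(u m * τ)) * τ^N) :=
      fun m => (((hexp_cont (u m)).mul (continuous_pow N)).measurable).ennreal_ofReal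
    have hfatou := lintegral_liminf_le hmeas (μ := ν) (u := Filter.atTop)
    have hptlim : ∀ᵐ τ ∂ν, Filter.liminf
        (fun m => ENNReal.ofReal (Real.exp (-(u m * τ)) * τ^N)) Filter.atTop
        = ENNReal.ofReal (τ^N) := by
      filter_upwards with τ
      exact (ENNReal.tendsto_ofReal (hexp_lim τ)).liminf_eq
    calc ∫⁻ τ, ENNReal.ofReal (τ^N) ∂ν
        = ∫⁻ τ, Filter.liminf (fun m => ENNReal.ofReal (Real.exp (-(u m * τ)) * τ^N))
            Filter.atTop ∂ν := (lintegral_congr_ae hptlim).symm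
      _ ≤ Filter.liminf (fun m => ∫⁻ τ, ENNReal.ofReal (Real.exp (-(u m * τ)) * τ^N) ∂ν)
            Filter.atTop := hfatou
      _ ≤ ENNReal.ofReal C := by
          have := Filter.liminf_le_liminf (Filter.Eventually.of_forall hIle)
            (f := Filter.atTop)
          rwa [Filter.liminf_const] at this
      _ < ⊤ := ENNReal.ofReal_lt_top
  have habs_int : Integrable (fun τ : ℝ => |τ|^N) ν := by
    apply hint.congr
    filter_upwards [hae] with τ hτ
    rw [_root_.abs_of_nonneg hτ]
  have hIlim : Filter.Tendsto (fun m => ∫ τ, Real.exp (-(u m * τ)) * τ^N ∂ν)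
      Filter.atTop (nhds (∫ τ, τ^N ∂ν)) := by
    apply tendsto_integral_of_dominated_convergence (fun τ => |τ|^N)
    · exact fun m => (((hexp_cont (u m)).mul (continuous_pow N))).aestronglyMeasurable
    · exact habs_int
    · intro m
      filter_upwards [hae] with τ hτ
      rw [Real.norm_eq_abs, abs_mul, _root_.abs_of_pos (Real.exp_pos _), _root_.abs_pow]
      apply mul_le_of_le_one_left (by positivity)
      apply Real.exp_le_one_iff.2
      have := (hu0 m).le
      nlinarith
    · filter_upwards with τ
      exact hexp_lim τ
  have hle1 : ∀ m : ℕ, (∫ τ, Real.exp (-(u m * τ)) * τ^N ∂ν)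
      ≤ (Nat.factorial N : ℝ) * ∑' j : ℕ, (-(u m))^j / Real.Gamma (α * (j + N) + 1) :=
    fun m => hK1 (u m) (hu0 m) (hu1 m)
  have hle2 : ∀ m : ℕ, (Nat.factorial N : ℝ)
      * (∑' j : ℕ, (-(u m))^j / Real.Gamma (α * (j + N) + 1)) ≤ ∫ τ, τ^N ∂ν :=
    fun m => hK3 (u m) (hu0 m) (hu1 m) hint
  have h1 : ∫ τ, τ^N ∂ν ≤ (Nat.factorial N : ℝ) / Real.Gamma (α * N + 1) :=
    le_of_tendsto_of_tendsto' hIlim hBlim hle1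
  have h2 : (Nat.factorial N : ℝ) / Real.Gamma (α * N + 1) ≤ ∫ τ, τ^N ∂ν :=
    le_of_tendsto' hBlim hle2
  exact ⟨hint, le_antisymm h1 h2⟩
end

section
/- Let 0 < α < 1 and let ν be a probability measure on [0,∞) whose moments satisfy ∫_0^∞ τ^n dν(τ) = n! / Γ(αn+1) for every n ∈ ℕ. Then for every complex number z with Re(z) ≥ 0, the integral representation E_α(−z) = ∫_0^∞ e^{−zτ} dν(τ) holds. -/
open MeasureTheory Complex

lemma summable_pow_div_gamma (α : ℝ) (hα : 0 < α) (r : ℝ) (hr : 0 ≤ r) :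
    Summable (fun n : ℕ => r ^ n / Real.Gamma (α * n + 1)) := by
  obtain ⟨K, hK⟩ := exists_nat_gt (max 2 ((r + 1) ^ α⁻¹))
  have hK2 : (2 : ℝ) < K := lt_of_le_of_lt (le_max_left _ _) hK
  have hK2n : 2 < K := by exact_mod_cast hK2
  have hK1 : (1 : ℝ) ≤ K := by linarith
  have hKpos : (0 : ℝ) < K := by linarith
  have hrK : r < (K : ℝ) ^ α := by
    have h0 : (0 : ℝ) ≤ (r + 1) ^ α⁻¹ := Real.rpow_nonneg (by linarith) _
    have h1 := Real.rpow_lt_rpow h0 (lt_of_le_of_lt (le_max_right _ _) hK) hα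
    rw [Real.rpow_inv_rpow (by linarith) hα.ne'] at h1
    linarith
  have hKα : (0 : ℝ) < (K : ℝ) ^ α := Real.rpow_pos_of_pos hKpos α
  set q : ℝ := r / (K : ℝ) ^ α with hq
  have hq0 : 0 ≤ q := div_nonneg hr hKα.le
  have hq1 : q < 1 := (div_lt_one hKα).mpr hrK
  -- eventual bound
  have hev : ∀ᶠ n : ℕ in Filter.atTop, (K + 1 : ℝ) ≤ α * n := by
    have : Filter.Tendsto (fun n : ℕ => α * n) Filter.atTop Filter.atTop :=
      (tendsto_natCast_atTop_atTop (R := ℝ)).const_mul_atTop hα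
    exact this.eventually_ge_atTop _
  apply summable_of_isBigO_nat (summable_geometric_of_lt_one hq0 hq1)
  rw [Asymptotics.isBigO_iff]
  refine ⟨(K : ℝ) ^ (K + 1), ?_⟩
  filter_upwards [hev] with n hn
  set m : ℕ := ⌊α * n⌋₊ with hm
  have hmle : (m : ℝ) ≤ α * n := Nat.floor_le (by positivity)
  have hmlt : α * n < m + 1 := Nat.lt_floor_add_one _
  have hKm : K + 1 ≤ m := Nat.le_floor (by exact_mod_cast hn)
  have hKm' : K ≤ m := le_trans (Nat.le_succ K) hKm
  -- Gamma lower bound : Γ(αn+1) ≥ m!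
  have hG1 : (m.factorial : ℝ) ≤ Real.Gamma (α * n + 1) := by
    have hmono := Real.Gamma_strictMonoOn_Ici.monotoneOn
    have h2m : (2 : ℝ) ≤ (m : ℝ) + 1 := by
      have h3 : 3 ≤ m := by omega
      have : (3 : ℝ) ≤ (m : ℝ) := by exact_mod_cast h3
      linarith
    have h2αn : (2 : ℝ) ≤ α * n + 1 := by
      have : (2 : ℝ) ≤ (m : ℝ) := by linarith
      linarith
    have := hmono (Set.mem_Ici.mpr h2m) (Set.mem_Ici.mpr h2αn) (by linarith)
    rwa [Real.Gamma_nat_eq_factorial] at this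
  -- factorial lower bound : m! ≥ K ^ (m - K)
  have hfac : ((K : ℝ)) ^ (m - K : ℕ) ≤ (m.factorial : ℝ) := by
    have h1 : K ^ (m - K) ≤ K.factorial * (K + 1) ^ (m - K) := by
      calc K ^ (m - K) ≤ (K + 1) ^ (m - K) := Nat.pow_le_pow_left (Nat.le_succ K) _
        _ ≤ K.factorial * (K + 1) ^ (m - K) := Nat.le_mul_of_pos_left _ K.factorial_pos
    have h2 : K.factorial * (K + 1) ^ (m - K) ≤ m.factorial := by
      have := Nat.factorial_mul_pow_le_factorial (m := K) (n := m - K)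
      rwa [Nat.add_sub_cancel' hKm'] at this
    exact_mod_cast le_trans h1 h2
  -- pow lower bound : K ^ (m - K) ≥ ((K:ℝ)^α)^n / K^(K+1)
  have hpow : ((K : ℝ) ^ α) ^ n / (K : ℝ) ^ (K + 1) ≤ (K : ℝ) ^ (m - K : ℕ) := by
    rw [div_le_iff₀ (by positivity), ← pow_add]
    have hle : (m - K : ℕ) + (K + 1) = m + 1 := by omega
    rw [hle]
    have h1 : ((K : ℝ) ^ α) ^ n = (K : ℝ) ^ (α * n) := by
      rw [← Real.rpow_natCast ((K : ℝ) ^ α) n, ← Real.rpow_mul hKpos.le]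
    have h2 : ((K : ℝ)) ^ (m + 1 : ℕ) = (K : ℝ) ^ ((m : ℝ) + 1) := by
      rw [← Real.rpow_natCast (K : ℝ) (m + 1)]
      push_cast
      ring_nf
    rw [h1, h2]
    exact Real.rpow_le_rpow_of_exponent_le hK1 (by linarith)
  have hΓpos : 0 < Real.Gamma (α * n + 1) := Real.Gamma_pos_of_pos (by positivity)
  have hfinal : r ^ n / Real.Gamma (α * n + 1) ≤ (K : ℝ) ^ (K + 1) * q ^ n := by
    have hden : ((K : ℝ) ^ α) ^ n / (K : ℝ) ^ (K + 1) ≤ Real.Gamma (α * n + 1) :=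
      le_trans hpow (le_trans hfac hG1)
    have hdenpos : (0 : ℝ) < ((K : ℝ) ^ α) ^ n / (K : ℝ) ^ (K + 1) := by positivity
    calc r ^ n / Real.Gamma (α * n + 1)
        ≤ r ^ n / (((K : ℝ) ^ α) ^ n / (K : ℝ) ^ (K + 1)) :=
          div_le_div_of_nonneg_left (pow_nonneg hr n) hdenpos hden
      _ = (K : ℝ) ^ (K + 1) * q ^ n := by
          rw [hq, div_pow, div_div_eq_mul_div]
          ring
  rw [Real.norm_eq_abs, Real.norm_eq_abs,
    _root_.abs_of_nonneg (show (0:ℝ) ≤ r ^ n / Real.Gamma (α * n + 1) by positivity),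
    _root_.abs_of_nonneg (show (0:ℝ) ≤ q ^ n from pow_nonneg hq0 n)]
  exact hfinal

/-- Let `0 < α < 1` and let `ν` be a probability measure on `[0,∞)` (a probability measure
on `ℝ` giving no mass to `(-∞,0)`) whose moments satisfy `∫ τⁿ dν(τ) = n!/Γ(αn+1)` for all
`n`. Then for every `z : ℂ` with `Re z ≥ 0` one has `E_α(−z) = ∫ e^{−zτ} dν(τ)`. -/
theorem mittagLeffler_laplace_representation
    (α : ℝ) (hα₁ : 0 < α) (hα₂ : α < 1)
    (ν : Measure ℝ) [IsProbabilityMeasure ν] (hsupp : ν (Set.Iio 0) = 0)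
    (hmom_int : ∀ n : ℕ, Integrable (fun τ : ℝ => τ ^ n) ν)
    (hmom : ∀ n : ℕ, ∫ τ, τ ^ n ∂ν = (Nat.factorial n : ℝ) / Real.Gamma (α * n + 1))
    (z : ℂ) (hz : 0 ≤ z.re) :
    mittagLeffler α (-z) = ∫ τ, Complex.exp (-z * (τ : ℂ)) ∂ν := by
  have hae : ∀ᵐ τ ∂ν, 0 ≤ τ := by
    rw [ae_iff]
    have : {τ : ℝ | ¬ 0 ≤ τ} = Set.Iio 0 := by ext τ; simp [not_le]
    rw [this]; exact hsupp
  set F : ℕ → ℝ → ℂ := fun n τ => (-z * τ) ^ n / (n.factorial : ℂ) with hF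
  have hΓpos : ∀ n : ℕ, 0 < Real.Gamma (α * n + 1) := fun n =>
    Real.Gamma_pos_of_pos (by positivity)
  have hFeq : ∀ (n : ℕ) (τ : ℝ), F n τ = ((-z) ^ n / (n.factorial : ℂ)) * ((τ ^ n : ℝ) : ℂ) := by
    intro n τ
    rw [hF]
    push_cast
    rw [mul_pow]
    ring
  have hint : ∀ n : ℕ, Integrable (F n) ν := by
    intro n
    have h1 : Integrable (fun τ : ℝ => ((τ ^ n : ℝ) : ℂ)) ν := (hmom_int n).ofReal
    have h2 := h1.const_mul ((-z) ^ n / (n.factorial : ℂ))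
    exact h2.congr (Filter.Eventually.of_forall fun τ => (hFeq n τ).symm)
  have hnormint : ∀ n : ℕ, ∫ τ, ‖F n τ‖ ∂ν = ‖z‖ ^ n / Real.Gamma (α * n + 1) := by
    intro n
    have h1 : ∫ τ, ‖F n τ‖ ∂ν = ∫ τ, (‖z‖ ^ n / (n.factorial : ℝ)) * τ ^ n ∂ν := by
      refine integral_congr_ae ?_
      filter_upwards [hae] with τ hτ
      rw [hFeq]
      rw [norm_mul, norm_div, norm_pow, norm_neg, Complex.norm_natCast,
        Complex.norm_real, Real.norm_eq_abs, _root_.abs_of_nonneg (pow_nonneg hτ n)]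
    rw [h1, integral_const_mul, hmom n]
    have hfac : (n.factorial : ℝ) ≠ 0 := Nat.cast_ne_zero.mpr n.factorial_ne_zero
    field_simp
  have hsum : Summable (fun n : ℕ => ∫ τ, ‖F n τ‖ ∂ν) := by
    rw [funext hnormint]
    exact summable_pow_div_gamma α hα₁ ‖z‖ (norm_nonneg z)
  have hswap := integral_tsum_of_summable_integral_norm hint hsum
  have hexp : ∀ τ : ℝ, (∑' n : ℕ, F n τ) = Complex.exp (-z * τ) := by
    intro τ
    rw [Complex.exp_eq_exp_ℂ, NormedSpace.exp_eq_tsum_div]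
  have hterm : ∀ n : ℕ, ∫ τ, F n τ ∂ν = (-z) ^ n / (Real.Gamma (α * n + 1) : ℂ) := by
    intro n
    have h1 : ∫ τ, F n τ ∂ν = ((-z) ^ n / (n.factorial : ℂ)) * ∫ τ, ((τ ^ n : ℝ) : ℂ) ∂ν := by
      rw [← integral_const_mul]
      exact integral_congr_ae (Filter.Eventually.of_forall fun τ => hFeq n τ)
    have h2 : ∫ τ : ℝ, ((τ ^ n : ℝ) : ℂ) ∂ν = ((∫ τ : ℝ, τ ^ n ∂ν : ℝ) : ℂ) := integral_ofReal
    rw [h1, h2, hmom n]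
    have hfac : ((n.factorial : ℕ) : ℂ) ≠ 0 := Nat.cast_ne_zero.mpr n.factorial_ne_zero
    have hΓ : (Real.Gamma (α * n + 1) : ℂ) ≠ 0 := by
      exact_mod_cast Complex.ofReal_ne_zero.mpr (hΓpos n).ne'
    push_cast
    field_simp
  calc mittagLeffler α (-z) = ∑' n : ℕ, ∫ τ, F n τ ∂ν := by
        rw [mittagLeffler]
        exact (tsum_congr hterm).symm
    _ = ∫ τ, (∑' n : ℕ, F n τ) ∂ν := hswap
    _ = ∫ τ, Complex.exp (-z * (τ : ℂ)) ∂ν :=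
        integral_congr_ae (Filter.Eventually.of_forall fun τ => hexp τ)
end

section
/- Let 0 < α < 1 and let ν be a probability measure on [0,∞) whose moments satisfy ∫_0^∞ τ^n dν(τ) = n! / Γ(αn+1) for every n ∈ ℕ. Then for every n ∈ ℕ and every real t ≥ 0 one has E_α^{(n)}(−t) = ∫_0^∞ τ^n e^{−tτ} dν(τ); in particular E_α^{(n)}(−t) is a nonnegative real number, i.e., t ↦ E_α(−t) is completely monotone on [0,∞). -/
open MeasureTheory Complex

namespace MLaux

/-- Coefficients of the `n`-th derivative series of the Mittag-Leffler function. -/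
noncomputable def dcoef (α : ℝ) (n k : ℕ) : ℝ :=
  (Nat.factorial (n + k) : ℝ) / (Nat.factorial k * Real.Gamma (α * (n + k) + 1))

lemma gamma_pos {α : ℝ} (hα : 0 < α) (m : ℕ) : 0 < Real.Gamma (α * m + 1) :=
  Real.Gamma_pos_of_pos (by positivity)

lemma dcoef_pos {α : ℝ} (hα : 0 < α) (n k : ℕ) : 0 < dcoef α n k := by
  have := gamma_pos hα (n + k)
  have h1 : (0:ℝ) < Nat.factorial (n + k) := by positivity
  have h2 : (0:ℝ) < Nat.factorial k := by positivity
  exact div_pos h1 (by positivity)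

lemma gamma_ratio_le {α : ℝ} (hα : 0 < α) {x : ℝ} (hx : 0 < x) :
    Real.Gamma (x + 1) / Real.Gamma (x + 1 + α) ≤ x ^ (-α) := by
  have h1 : (0:ℝ) < x + 1 := by linarith
  have h2 : (0:ℝ) < x + 1 + α := by linarith
  have hΓx : 0 < Real.Gamma x := Real.Gamma_pos_of_pos hx
  have hΓ1 : 0 < Real.Gamma (x+1) := Real.Gamma_pos_of_pos h1
  have hΓ2 : 0 < Real.Gamma (x+1+α) := Real.Gamma_pos_of_pos h2
  have slope := Real.convexOn_log_Gamma.slope_mono_adjacent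
    (Set.mem_Ioi.mpr hx) (Set.mem_Ioi.mpr h2)
    (by linarith : x < x + 1) (by linarith : x + 1 < x + 1 + α)
  have hgadd : Real.Gamma (x+1) = x * Real.Gamma x := Real.Gamma_add_one hx.ne'
  have e1 : (Real.log ∘ Real.Gamma) (x+1) - (Real.log ∘ Real.Gamma) x = Real.log x := by
    simp only [Function.comp_apply, hgadd, Real.log_mul hx.ne' hΓx.ne']
    ring
  rw [e1] at slope
  have e2 : (Real.log ∘ Real.Gamma) (x+1+α) - (Real.log ∘ Real.Gamma) (x+1)
      = Real.log (Real.Gamma (x+1+α) / Real.Gamma (x+1)) := by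
    simp only [Function.comp_apply, Real.log_div hΓ2.ne' hΓ1.ne']
  rw [e2] at slope
  have hden : x + 1 - x = 1 := by ring
  have hden2 : x + 1 + α - (x + 1) = α := by ring
  rw [hden, hden2, div_one] at slope
  -- slope : log x ≤ log (Γ(x+1+α)/Γ(x+1)) / α
  have h3 : α * Real.log x ≤ Real.log (Real.Gamma (x+1+α) / Real.Gamma (x+1)) := by
    rw [le_div_iff₀ hα] at slope
    linarith [slope]
  have h4 : x ^ α ≤ Real.Gamma (x+1+α) / Real.Gamma (x+1) := by
    have h5 := Real.exp_le_exp.mpr h3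
    rw [Real.exp_log (div_pos hΓ2 hΓ1)] at h5
    rw [Real.rpow_def_of_pos hx, mul_comm]
    exact h5
  have hxα : 0 < x ^ α := Real.rpow_pos_of_pos hx α
  rw [Real.rpow_neg hx.le]
  calc Real.Gamma (x+1) / Real.Gamma (x+1+α) = (Real.Gamma (x+1+α) / Real.Gamma (x+1))⁻¹ := by
        rw [inv_div]
    _ ≤ (x ^ α)⁻¹ := by
        apply inv_anti₀ hxα h4

lemma dcoef_succ_le {α : ℝ} (hα : 0 < α) (n : ℕ) {k : ℕ} (hk : 1 ≤ k) :
    dcoef α n (k+1) ≤ ((n:ℝ)+1) * (α * k) ^ (-α) * dcoef α n k := by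
  have hkpos : (0:ℝ) < k := by exact_mod_cast hk
  have hαk : 0 < α * (k:ℝ) := by positivity
  have hαm : 0 < α * ((n:ℝ) + (k:ℝ)) := by positivity
  have hΓr := gamma_ratio_le hα hαm
  have h2 : (α*((n:ℝ)+(k:ℝ)))^(-α) ≤ (α*(k:ℝ))^(-α) := by
    apply Real.rpow_le_rpow_of_nonpos hαk
    · nlinarith [Nat.cast_nonneg (α := ℝ) n]
    · linarith
  have hΓ1 : 0 < Real.Gamma (α*((n:ℝ)+(k:ℝ))+1) := Real.Gamma_pos_of_pos (by positivity)
  have hΓ2 : 0 < Real.Gamma (α*((n:ℝ)+(k:ℝ))+1+α) := Real.Gamma_pos_of_pos (by positivity)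
  have hG : Real.Gamma (α*((n:ℝ)+(k:ℝ))+1)
      ≤ (α*(k:ℝ))^(-α) * Real.Gamma (α*((n:ℝ)+(k:ℝ))+1+α) := by
    rw [div_le_iff₀ hΓ2] at hΓr
    calc Real.Gamma (α*((n:ℝ)+(k:ℝ))+1)
        ≤ (α*((n:ℝ)+(k:ℝ)))^(-α) * Real.Gamma (α*((n:ℝ)+(k:ℝ))+1+α) := hΓr
      _ ≤ (α*(k:ℝ))^(-α) * Real.Gamma (α*((n:ℝ)+(k:ℝ))+1+α) := by gcongr
  have hfm : (0:ℝ) < Nat.factorial (n+k) := by positivity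
  have hfk : (0:ℝ) < Nat.factorial k := by positivity
  have e : dcoef α n (k+1)
      = (((n:ℝ)+(k:ℝ))+1) * (Nat.factorial (n+k) : ℝ)
        / ((((k:ℝ)+1) * (Nat.factorial k : ℝ)) * Real.Gamma (α*((n:ℝ)+(k:ℝ))+1+α)) := by
    rw [dcoef, show n + (k+1) = (n+k) + 1 from rfl, Nat.factorial_succ, Nat.factorial_succ]
    push_cast
    rw [show α * ((n:ℝ) + ((k:ℝ)+1)) + 1 = α*((n:ℝ)+(k:ℝ))+1+α from by ring]
  have e2 : ((n:ℝ)+1) * (α * k) ^ (-α) * dcoef α n k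
      = (((n:ℝ)+1) * (α*(k:ℝ))^(-α) * (Nat.factorial (n+k) : ℝ))
        / ((Nat.factorial k : ℝ) * Real.Gamma (α*((n:ℝ)+(k:ℝ))+1)) := by
    rw [dcoef]; ring
  rw [e, e2, div_le_div_iff₀ (by positivity) (by positivity)]
  calc (((n:ℝ)+(k:ℝ))+1) * (Nat.factorial (n+k) : ℝ)
        * ((Nat.factorial k : ℝ) * Real.Gamma (α*((n:ℝ)+(k:ℝ))+1))
      ≤ (((n:ℝ)+1) * ((k:ℝ)+1)) * (Nat.factorial (n+k) : ℝ)
        * ((Nat.factorial k : ℝ)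
            * ((α*(k:ℝ))^(-α) * Real.Gamma (α*((n:ℝ)+(k:ℝ))+1+α))) := by
        gcongr
        nlinarith [Nat.cast_nonneg (α := ℝ) n, Nat.cast_nonneg (α := ℝ) k]
    _ = ((n:ℝ)+1) * (α*(k:ℝ))^(-α) * (Nat.factorial (n+k) : ℝ)
        * ((((k:ℝ)+1) * (Nat.factorial k : ℝ)) * Real.Gamma (α*((n:ℝ)+(k:ℝ))+1+α)) := by
        ring

lemma summable_dcoef {α : ℝ} (hα : 0 < α) (n : ℕ) {R : ℝ} (hR : 0 < R) :
    Summable (fun k => dcoef α n k * R ^ k) := by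
  have hpos : ∀ k, 0 < dcoef α n k * R ^ k := fun k =>
    mul_pos (dcoef_pos hα n k) (pow_pos hR k)
  apply summable_of_ratio_test_tendsto_lt_one (l := 0) zero_lt_one
    (Filter.Eventually.of_forall fun k => (hpos k).ne')
  have hb : Filter.Tendsto (fun k : ℕ => ((n:ℝ)+1) * (α * k) ^ (-α) * R)
      Filter.atTop (nhds 0) := by
    have h1 : Filter.Tendsto (fun k : ℕ => (α * (k:ℝ)) ^ (-α)) Filter.atTop (nhds 0) :=
      (tendsto_rpow_neg_atTop hα).comp
        (Filter.Tendsto.const_mul_atTop hα tendsto_natCast_atTop_atTop)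
    simpa using (h1.const_mul ((n:ℝ)+1)).mul_const R
  apply squeeze_zero' (Filter.Eventually.of_forall fun k => by positivity) ?_ hb
  filter_upwards [Filter.eventually_ge_atTop 1] with k hk
  rw [Real.norm_eq_abs, Real.norm_eq_abs, abs_of_pos (hpos _), abs_of_pos (hpos _),
    div_le_iff₀ (hpos k)]
  calc dcoef α n (k+1) * R ^ (k+1)
      = dcoef α n (k+1) * R ^ k * R := by rw [pow_succ]; ring
    _ ≤ ((n:ℝ)+1) * (α * k) ^ (-α) * dcoef α n k * R ^ k * R := by
        gcongr
        exact dcoef_succ_le hα n hk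
    _ = ((n:ℝ)+1) * (α * k) ^ (-α) * R * (dcoef α n k * R ^ k) := by ring

lemma summable_dcoef_abs {α : ℝ} (hα : 0 < α) (n : ℕ) (x : ℝ) :
    Summable (fun k => dcoef α n k * x ^ k) := by
  have h := summable_dcoef hα n (R := |x| + 1) (by positivity)
  refine Summable.of_norm_bounded h (fun k => ?_)
  rw [Real.norm_eq_abs, abs_mul, _root_.abs_pow, abs_of_pos (dcoef_pos hα n k)]
  have h0 : 0 ≤ dcoef α n k := (dcoef_pos hα n k).le
  gcongr
  linarith [abs_nonneg x]

lemma dcoef_succ (α : ℝ) (n j : ℕ) (hΓ : Real.Gamma (α * ((n:ℝ)+1+j) + 1) ≠ 0) :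
    dcoef α n (j+1) * ((j:ℝ)+1) = dcoef α (n+1) j := by
  rw [dcoef, dcoef, show n + (j+1) = (n+1) + j from by omega]
  have hj : ((j:ℝ)+1) ≠ 0 := by positivity
  have hjf : ((Nat.factorial j : ℝ)) ≠ 0 := by positivity
  rw [Nat.factorial_succ]
  push_cast
  rw [show α * ((n:ℝ) + ((j:ℝ)+1)) + 1 = α * ((n:ℝ)+1+(j:ℝ)) + 1 from by ring,
    show α * (((n:ℝ)+1) + (j:ℝ)) + 1 = α * ((n:ℝ)+1+(j:ℝ)) + 1 from by ring]
  field_simp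

lemma iter_deriv {α : ℝ} (hα : 0 < α) (n : ℕ) :
    iteratedDeriv n (mittagLeffler α) = fun z => ∑' k, (dcoef α n k : ℂ) * z ^ k := by
  induction n with
  | zero =>
    funext z
    rw [iteratedDeriv_zero, mittagLeffler]
    refine tsum_congr fun k => ?_
    have hΓ : Real.Gamma (α * k + 1) ≠ 0 := (gamma_pos hα k).ne'
    have hk : ((Nat.factorial k : ℝ)) ≠ 0 := by positivity
    simp only [dcoef, Nat.zero_add, Nat.cast_zero, zero_add]
    have : (Nat.factorial k : ℝ) / (Nat.factorial k * Real.Gamma (α * k + 1))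
        = 1 / Real.Gamma (α * k + 1) := by field_simp
    rw [this]
    push_cast
    ring
  | succ n ih =>
    rw [iteratedDeriv_succ, ih]
    funext z
    set R : ℝ := ‖z‖ + 1 with hRdef
    have hR : 0 < R := by positivity
    set u : ℕ → ℝ := fun k => dcoef α n k * k * R ^ k / R with hudef
    have hsum2 : Summable (fun k => dcoef α n k * k * R ^ k) := by
      refine Summable.of_nonneg_of_le (fun k => mul_nonneg (mul_nonneg
          (dcoef_pos hα n k).le (Nat.cast_nonneg k)) (pow_nonneg hR.le k)) (fun k => ?_)
        (summable_dcoef hα n (R := 2 * R) (mul_pos two_pos hR))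
      have hk : (k:ℝ) ≤ 2 ^ k := by exact_mod_cast (Nat.lt_two_pow_self (n := k)).le
      calc dcoef α n k * k * R ^ k ≤ dcoef α n k * 2 ^ k * R ^ k := by
            gcongr
            exact (dcoef_pos hα n k).le
        _ = dcoef α n k * (2 * R) ^ k := by rw [mul_pow]; ring
    have hu : Summable u := by
      simpa [hudef, div_eq_mul_inv] using hsum2.mul_right R⁻¹
    have hderiv := hasDerivAt_tsum_of_isPreconnected
      (g := fun k w => (dcoef α n k : ℂ) * w ^ k)
      (g' := fun k y => (dcoef α n k : ℂ) * (k * y ^ (k-1)))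
      hu Metric.isOpen_ball (convex_ball (0:ℂ) R).isPreconnected
      (fun k y _ => (hasDerivAt_pow k y).const_mul _)
      (fun k y hy => ?_) (Metric.mem_ball_self hR) ?_
      (mem_ball_zero_iff.mpr (by simp [hRdef]) : z ∈ Metric.ball (0:ℂ) R)
    · rw [hderiv.deriv]
      have hinj : Function.Injective Nat.succ := Nat.succ_injective
      have hsupp : Function.support (fun k => (dcoef α n k : ℂ) * (k * z ^ (k-1)))
          ⊆ Set.range Nat.succ := by
        intro k hk
        match k with
        | 0 => exact absurd (by simp) hk
        | j+1 => exact ⟨j, rfl⟩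
      rw [← hinj.tsum_eq hsupp]
      refine tsum_congr fun j => ?_
      have hΓ : Real.Gamma (α * ((n:ℝ)+1+j) + 1) ≠ 0 := by
        apply ne_of_gt; apply Real.Gamma_pos_of_pos; positivity
      have hd := dcoef_succ α n j hΓ
      have : ((dcoef α n (j+1) * ((j:ℝ)+1) : ℝ) : ℂ) = ((dcoef α (n+1) j : ℝ) : ℂ) := by
        rw [hd]
      calc (dcoef α n (j+1) : ℂ) * ((Nat.succ j : ℕ) * z ^ (Nat.succ j - 1))
          = ((dcoef α n (j+1) * ((j:ℝ)+1) : ℝ) : ℂ) * z ^ j := by push_cast; ring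
        _ = (dcoef α (n+1) j : ℂ) * z ^ j := by rw [this]
    · -- derivative bound
      have hy' : ‖y‖ ≤ R := (mem_ball_zero_iff.mp hy).le
      match k with
      | 0 => simp [hudef]
      | j+1 =>
        have h1 : ‖(dcoef α n (j+1) : ℂ)‖ = dcoef α n (j+1) := by
          rw [Complex.norm_real, Real.norm_eq_abs, _root_.abs_of_pos (dcoef_pos hα n (j+1))]
        have h2 : ‖(((j+1:ℕ)) : ℂ)‖ = ((j:ℝ)+1) := by
          rw [Complex.norm_natCast]; push_cast; ring
        have hnorm : ‖(dcoef α n (j+1) : ℂ) * (((j+1:ℕ):ℂ) * y ^ (j+1-1))‖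
            = dcoef α n (j+1) * (((j:ℝ)+1) * ‖y‖ ^ j) := by
          rw [norm_mul, norm_mul, norm_pow, h1, h2]
          rfl
        rw [hnorm]
        show _ ≤ u (j+1)
        have hu1 : u (j+1) = dcoef α n (j+1) * (((j:ℝ)+1) * R ^ j) := by
          simp only [hudef]
          push_cast
          rw [pow_succ]
          field_simp
        rw [hu1]
        have h0 : 0 ≤ dcoef α n (j+1) := (dcoef_pos hα n (j+1)).le
        gcongr
    · -- summability at 0
      apply summable_of_ne_finset_zero (s := {0})
      intro k hk
      simp only [Finset.mem_singleton] at hk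
      simp [zero_pow hk]

end MLaux

open MLaux in
/-- Let `0 < α < 1` and let `ν` be a probability measure on `[0,∞)` (a probability measure
on `ℝ` giving no mass to `(-∞,0)`) whose moments satisfy `∫ τⁿ dν(τ) = n!/Γ(αn+1)` for all
`n`. Then for every `n` and every real `t ≥ 0`,
`E_α⁽ⁿ⁾(−t) = ∫ τⁿ e^{−tτ} dν(τ)`; in particular this is a nonnegative real number,
i.e. `t ↦ E_α(−t)` is completely monotone on `[0,∞)`. -/
theorem mittagLeffler_completely_monotone
    (α : ℝ) (hα₁ : 0 < α) (hα₂ : α < 1)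
    (ν : Measure ℝ) [IsProbabilityMeasure ν] (hsupp : ν (Set.Iio 0) = 0)
    (hmom_int : ∀ n : ℕ, Integrable (fun τ : ℝ => τ ^ n) ν)
    (hmom : ∀ n : ℕ, ∫ τ, τ ^ n ∂ν = (Nat.factorial n : ℝ) / Real.Gamma (α * n + 1))
    (n : ℕ) (t : ℝ) (ht : 0 ≤ t) :
    iteratedDeriv n (mittagLeffler α) (-(t : ℂ)) =
        ((∫ τ, τ ^ n * Real.exp (-t * τ) ∂ν : ℝ) : ℂ) ∧
      0 ≤ ∫ τ, τ ^ n * Real.exp (-t * τ) ∂ν := by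
  have hae : ∀ᵐ τ ∂ν, 0 ≤ τ := by
    rw [ae_iff]
    have : {τ : ℝ | ¬ 0 ≤ τ} = Set.Iio 0 := by ext τ; simp [not_le]
    rw [this]; exact hsupp
  have hFint : ∀ k : ℕ, Integrable (fun τ : ℝ => (-t)^k / (Nat.factorial k) * τ^(n+k)) ν :=
    fun k => (hmom_int (n+k)).const_mul _
  have habs : ∀ k : ℕ, ∫ τ, ‖(-t)^k / (Nat.factorial k : ℝ) * τ^(n+k)‖ ∂ν
      = dcoef α n k * t^k := by
    intro k
    have hcongr : ∀ᵐ τ ∂ν, ‖(-t)^k / (Nat.factorial k : ℝ) * τ^(n+k)‖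
        = (t^k / (Nat.factorial k : ℝ)) * τ^(n+k) := by
      filter_upwards [hae] with τ hτ
      rw [Real.norm_eq_abs, abs_mul, abs_div, _root_.abs_pow, _root_.abs_pow, abs_neg,
        _root_.abs_of_nonneg ht, _root_.abs_of_nonneg hτ, Nat.abs_cast]
    rw [integral_congr_ae hcongr, integral_const_mul, hmom (n+k), dcoef]
    push_cast
    ring
  have hsumm : Summable (fun k => dcoef α n k * t^k) := summable_dcoef_abs hα₁ n t
  have hs := MeasureTheory.hasSum_integral_of_summable_integral_norm hFint
    (hsumm.congr fun k => (habs k).symm)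
  have hptw : ∀ τ : ℝ, ∑' k, (-t)^k / (Nat.factorial k : ℝ) * τ^(n+k)
      = τ^n * Real.exp (-t * τ) := by
    intro τ
    have h1 : ∀ k : ℕ, (-t)^k / (Nat.factorial k : ℝ) * τ^(n+k)
        = τ^n * ((-t*τ)^k / (Nat.factorial k : ℝ)) := by
      intro k; rw [pow_add, mul_pow]; ring
    rw [tsum_congr h1, tsum_mul_left, Real.exp_eq_exp_ℝ, NormedSpace.exp_eq_tsum_div]
  have hintval : ∀ k : ℕ, ∫ τ, (-t)^k / (Nat.factorial k : ℝ) * τ^(n+k) ∂ν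
      = dcoef α n k * (-t)^k := by
    intro k
    rw [integral_const_mul, hmom (n+k), dcoef]
    push_cast
    ring
  have hint : ∫ τ, τ^n * Real.exp (-t*τ) ∂ν = ∑' k, dcoef α n k * (-t)^k := by
    have e1 : ∫ τ, τ^n * Real.exp (-t*τ) ∂ν
        = ∫ τ, ∑' k, (-t)^k / (Nat.factorial k : ℝ) * τ^(n+k) ∂ν :=
      integral_congr_ae (Filter.Eventually.of_forall fun τ => (hptw τ).symm)
    rw [e1, ← hs.tsum_eq]
    exact tsum_congr hintval
  constructor
  · rw [iter_deriv hα₁ n, hint, Complex.ofReal_tsum]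
    refine tsum_congr fun k => ?_
    push_cast
    ring
  · apply integral_nonneg_of_ae
    filter_upwards [hae] with τ hτ
    exact mul_nonneg (pow_nonneg hτ n) (Real.exp_pos _).le
end

section
/- Let 0 < α < 1, let ν be a probability measure on [0,∞) whose moments satisfy ∫_0^∞ τ^n dν(τ) = n! / Γ(αn+1) for every n ∈ ℕ, let (M, 𝓑) be a measurable space with a measure μ, and let φ_1, …, φ_N : M → ℝ be measurable functions such that x ↦ e^{i(φ_a(x) − φ_b(x))} − 1 is μ-integrable for all a, b ∈ {1,…,N}. Then the N × N complex matrix A with entries A_{ab} = E_α( ∫_M (e^{i(φ_a(x) − φ_b(x))} − 1) dμ(x) ) is positive semidefinite: for all z_1, …, z_N ∈ ℂ, the sum ∑_{a,b} conj(z_a) z_b A_{ab} is a nonnegative real number. -/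
open MeasureTheory Complex
open scoped ComplexOrder

lemma integral_nonneg_cplx {M : Type*} [MeasurableSpace M] {μ : Measure M} {f : M → ℂ}
    (hf : Integrable f μ) (h : ∀ᵐ x ∂μ, 0 ≤ f x) : 0 ≤ ∫ x, f x ∂μ := by
  rw [Complex.le_def]
  constructor
  · simp only [Complex.zero_re]
    rw [show (∫ x, f x ∂μ).re = ∫ x, (f x).re ∂μ from (integral_re hf).symm]
    exact integral_nonneg_of_ae (h.mono fun x hx => hx.1)
  · simp only [Complex.zero_im]
    rw [show (∫ x, f x ∂μ).im = ∫ x, (f x).im ∂μ from (integral_im hf).symm]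
    symm
    rw [show (0:ℝ) = ∫ x, (0:ℝ) ∂μ by simp]
    exact integral_congr_ae (h.mono fun x hx => by simpa using hx.2.symm)

lemma gram_pow_nonneg {M : Type*} [MeasurableSpace M] (μ : Measure M) {N : ℕ}
    (v : Fin N → M → ℂ)
    (hint : ∀ a b, Integrable (fun x => (starRingEnd ℂ) (v a x) * v b x) μ) :
    ∀ (n : ℕ) (z : Fin N → ℂ),
      0 ≤ ∑ a, ∑ b, (starRingEnd ℂ) (z a) * z b * (∫ x, (starRingEnd ℂ) (v a x) * v b x ∂μ) ^ n := by
  intro n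
  induction n with
  | zero =>
    intro z
    simp only [pow_zero, mul_one]
    have : ∑ a, ∑ b, (starRingEnd ℂ) (z a) * z b
        = (starRingEnd ℂ) (∑ a, z a) * (∑ b, z b) := by
      rw [map_sum, Finset.sum_mul_sum]
    rw [this]
    exact star_mul_self_nonneg _
  | succ n ih =>
    intro z
    have key : ∀ a b, (starRingEnd ℂ) (z a) * z b * (∫ x, (starRingEnd ℂ) (v a x) * v b x ∂μ) ^ (n+1)
        = ∫ x, (starRingEnd ℂ) (z a * v a x) * (z b * v b x)
            * (∫ y, (starRingEnd ℂ) (v a y) * v b y ∂μ) ^ n ∂μ := by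
      intro a b
      rw [pow_succ]
      have : ∀ x, (starRingEnd ℂ) (z a * v a x) * (z b * v b x)
            * (∫ y, (starRingEnd ℂ) (v a y) * v b y ∂μ) ^ n
          = ((starRingEnd ℂ) (z a) * z b * (∫ y, (starRingEnd ℂ) (v a y) * v b y ∂μ) ^ n)
            * ((starRingEnd ℂ) (v a x) * v b x) := by
        intro x; simp only [map_mul]; ring
      simp only [this]
      rw [integral_const_mul]
      ring
    have hInt : ∀ a b : Fin N, Integrable
        (fun x => (starRingEnd ℂ) (z a * v a x) * (z b * v b x)
          * (∫ y, (starRingEnd ℂ) (v a y) * v b y ∂μ) ^ n) μ := by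
      intro a b
      have : (fun x => (starRingEnd ℂ) (z a * v a x) * (z b * v b x)
            * (∫ y, (starRingEnd ℂ) (v a y) * v b y ∂μ) ^ n)
          = fun x => ((starRingEnd ℂ) (z a) * z b * (∫ y, (starRingEnd ℂ) (v a y) * v b y ∂μ) ^ n)
            * ((starRingEnd ℂ) (v a x) * v b x) := by
        funext x; simp only [map_mul]; ring
      rw [this]
      exact (hint a b).const_mul _
    simp only [key]
    calc ∑ a, ∑ b, ∫ x, (starRingEnd ℂ) (z a * v a x) * (z b * v b x)
            * (∫ y, (starRingEnd ℂ) (v a y) * v b y ∂μ) ^ n ∂μ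
        = ∑ a, ∫ x, ∑ b, (starRingEnd ℂ) (z a * v a x) * (z b * v b x)
            * (∫ y, (starRingEnd ℂ) (v a y) * v b y ∂μ) ^ n ∂μ :=
          Finset.sum_congr rfl fun a _ => (integral_finset_sum _ fun b _ => hInt a b).symm
      _ = ∫ x, ∑ a, ∑ b, (starRingEnd ℂ) (z a * v a x) * (z b * v b x)
            * (∫ y, (starRingEnd ℂ) (v a y) * v b y ∂μ) ^ n ∂μ :=
          (integral_finset_sum _ fun a _ => integrable_finset_sum _ fun b _ => hInt a b).symm
      _ ≥ 0 := by
          apply integral_nonneg_cplx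
          · exact integrable_finset_sum _ fun a _ => integrable_finset_sum _ fun b _ => hInt a b
          · filter_upwards with x
            exact ih (fun a => z a * v a x)

lemma gamma_ratio_lb {α x : ℝ} (hα₁ : 0 < α) (hα₂ : α < 1) (hx : 1 ≤ x) :
    x ^ α / 2 * Real.Gamma x ≤ Real.Gamma (x + α) := by
  have hx0 : 0 < x := lt_of_lt_of_le one_pos hx
  have hxα : 0 < x + α := by linarith
  have hΓxα : 0 < Real.Gamma (x + α) := Real.Gamma_pos_of_pos hxα
  have hΓx : 0 < Real.Gamma x := Real.Gamma_pos_of_pos hx0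
  have key : Real.Gamma (x + 1) ≤ Real.Gamma (x + α) * (x + α) ^ (1 - α) := by
    have hc := Real.convexOn_log_Gamma
    have h1 : (x + α) ∈ Set.Ioi (0:ℝ) := hxα
    have h2 : (x + 1 + α) ∈ Set.Ioi (0:ℝ) := by simp; linarith
    have hcomb := hc.2 h1 h2 hα₁.le (by linarith : (0:ℝ) ≤ 1 - α) (by ring)
    have hpt : α • (x + α) + (1 - α) • (x + 1 + α) = x + 1 := by
      simp only [smul_eq_mul]; ring
    rw [hpt] at hcomb
    have hΓ1 : Real.Gamma (x + 1 + α) = (x + α) * Real.Gamma (x + α) := by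
      rw [show x + 1 + α = (x + α) + 1 by ring, Real.Gamma_add_one (ne_of_gt hxα)]
    simp only [Function.comp, smul_eq_mul] at hcomb
    rw [hΓ1, Real.log_mul (ne_of_gt hxα) (ne_of_gt hΓxα)] at hcomb
    have hcomb' : Real.log (Real.Gamma (x + 1)) ≤
        Real.log (Real.Gamma (x + α)) + (1 - α) * Real.log (x + α) := by nlinarith
    calc Real.Gamma (x + 1) = Real.exp (Real.log (Real.Gamma (x + 1))) :=
          (Real.exp_log (Real.Gamma_pos_of_pos (by linarith))).symm
      _ ≤ Real.exp (Real.log (Real.Gamma (x + α)) + (1 - α) * Real.log (x + α)) :=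
          Real.exp_le_exp.2 hcomb'
      _ = Real.Gamma (x + α) * (x + α) ^ (1 - α) := by
          rw [Real.exp_add, Real.exp_log hΓxα, ← Real.exp_log hxα, ← Real.exp_mul,
            Real.exp_log hxα]
          ring_nf
  have hb : (x + α) ^ (1 - α) ≤ 2 * x ^ (1 - α) := by
    have h1 : (x + α) ^ (1 - α) ≤ (2 * x) ^ (1 - α) :=
      Real.rpow_le_rpow hxα.le (by linarith) (by linarith)
    have h2 : (2 * x) ^ (1 - α) = 2 ^ (1 - α) * x ^ (1 - α) :=
      Real.mul_rpow (by norm_num) hx0.le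
    have h3 : (2:ℝ) ^ (1 - α) ≤ 2 ^ (1:ℝ) :=
      Real.rpow_le_rpow_of_exponent_le (by norm_num) (by linarith)
    have h4 : (0:ℝ) ≤ x ^ (1 - α) := Real.rpow_nonneg hx0.le _
    rw [Real.rpow_one] at h3
    nlinarith
  have hΓx1 : Real.Gamma (x + 1) = x * Real.Gamma x := Real.Gamma_add_one (ne_of_gt hx0)
  have hsplit : x ^ α * x ^ (1 - α) = x := by
    rw [← Real.rpow_add hx0]; norm_num
  have hxapos : (0:ℝ) < x ^ α := Real.rpow_pos_of_pos hx0 _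
  have hx1apos : (0:ℝ) < x ^ (1-α) := Real.rpow_pos_of_pos hx0 _
  have : x * Real.Gamma x ≤ Real.Gamma (x + α) * (2 * x ^ (1-α)) := by
    calc x * Real.Gamma x = Real.Gamma (x+1) := hΓx1.symm
      _ ≤ Real.Gamma (x + α) * (x + α) ^ (1 - α) := key
      _ ≤ Real.Gamma (x + α) * (2 * x ^ (1-α)) := by nlinarith
  nlinarith [mul_pos hΓx hxapos]

lemma ml_summable_s8 {α : ℝ} (hα₁ : 0 < α) (hα₂ : α < 1) (r : ℝ) (hr : 0 ≤ r) :
    Summable (fun n : ℕ => r ^ n / Real.Gamma (α * n + 1)) := by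
  apply summable_of_ratio_norm_eventually_le (r := 1/2) (by norm_num)
  have hten : Filter.Tendsto (fun n : ℕ => (α * n + 1) ^ α) Filter.atTop Filter.atTop := by
    apply (tendsto_rpow_atTop hα₁).comp
    exact Filter.tendsto_atTop_add_const_right _ _
      ((tendsto_natCast_atTop_atTop (R := ℝ)).const_mul_atTop hα₁)
  filter_upwards [hten.eventually_ge_atTop (4 * r + 2)] with n hn
  have hx1 : (1:ℝ) ≤ α * n + 1 := by
    have := mul_nonneg hα₁.le (Nat.cast_nonneg n : (0:ℝ) ≤ n); linarith
  have hΓn : 0 < Real.Gamma (α * n + 1) := Real.Gamma_pos_of_pos (by linarith)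
  have hΓn1 : 0 < Real.Gamma (α * n + 1 + α) := Real.Gamma_pos_of_pos (by linarith)
  have hratio := gamma_ratio_lb hα₁ hα₂ hx1
  have heq : α * ((n:ℝ)+1) + 1 = (α * n + 1) + α := by ring
  push_cast
  rw [heq]
  have hkey : (2 * r + 1) * Real.Gamma (α * n + 1) ≤ Real.Gamma ((α * n + 1) + α) := by
    calc (2 * r + 1) * Real.Gamma (α * n + 1) ≤ (α * n + 1) ^ α / 2 * Real.Gamma (α * n + 1) := by
          nlinarith
      _ ≤ _ := hratio
  have hrn : (0:ℝ) ≤ r ^ n := pow_nonneg hr n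
  rw [Real.norm_of_nonneg (by positivity), Real.norm_of_nonneg (by positivity)]
  have hhalf : 1/2 * (r^n / Real.Gamma (α * n + 1)) = r^n / (2 * Real.Gamma (α * n + 1)) := by
    ring
  rw [hhalf, div_le_div_iff₀ hΓn1 (by positivity), pow_succ]
  nlinarith

lemma ml_integral_rep {α : ℝ} (hα₁ : 0 < α) (hα₂ : α < 1)
    (ν : Measure ℝ) [IsProbabilityMeasure ν] (hsupp : ν (Set.Iio 0) = 0)
    (hmom_int : ∀ n : ℕ, Integrable (fun τ : ℝ => τ ^ n) ν)
    (hmom : ∀ n : ℕ, ∫ τ, τ ^ n ∂ν = (Nat.factorial n : ℝ) / Real.Gamma (α * n + 1))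
    (w : ℂ) :
    mittagLeffler α w = ∫ τ, Complex.exp ((τ : ℂ) * w) ∂ν := by
  have hae : ∀ᵐ τ ∂ν, 0 ≤ τ := by
    rw [ae_iff]
    convert hsupp using 2
    ext τ; simp [Set.mem_Iio, not_le]
  have hΓpos : ∀ n : ℕ, 0 < Real.Gamma (α * n + 1) := fun n =>
    Real.Gamma_pos_of_pos (by positivity)
  have hexp : ∀ τ : ℝ, Complex.exp ((τ : ℂ) * w)
      = ∑' n : ℕ, ((τ : ℂ) * w) ^ n / (n.factorial : ℂ) := by
    intro τ
    rw [Complex.exp_eq_exp_ℂ, NormedSpace.exp_eq_tsum_div]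
  have hterm : ∀ n : ℕ, ∫ τ, ((τ : ℂ) * w) ^ n / (n.factorial : ℂ) ∂ν
      = w ^ n / Real.Gamma (α * n + 1) := by
    intro n
    have : (fun τ : ℝ => ((τ : ℂ) * w) ^ n / (n.factorial : ℂ)) =
        fun τ : ℝ => ((τ ^ n : ℝ) : ℂ) * (w ^ n / (n.factorial : ℂ)) := by
      funext τ; push_cast; ring
    rw [this, integral_mul_const,
      show (∫ τ : ℝ, ((τ^n : ℝ) : ℂ) ∂ν) = (((∫ τ : ℝ, τ^n ∂ν : ℝ)) : ℂ) from integral_ofReal,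
      hmom n]
    have hne : ((n.factorial : ℝ) : ℂ) ≠ 0 := by
      exact_mod_cast Nat.cast_ne_zero.2 (Nat.factorial_ne_zero n)
    have hΓne : ((Real.Gamma (α * n + 1) : ℝ) : ℂ) ≠ 0 := by
      exact_mod_cast ne_of_gt (hΓpos n)
    push_cast
    field_simp
  have hnormint : ∀ n : ℕ, Integrable
      (fun τ : ℝ => ‖((τ : ℂ) * w) ^ n / (n.factorial : ℂ)‖) ν := by
    intro n
    have : (fun τ : ℝ => ‖((τ : ℂ) * w) ^ n / (n.factorial : ℂ)‖) =
        fun τ : ℝ => |τ ^ n| * (‖w‖ ^ n / (n.factorial : ℝ)) := by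
      funext τ
      rw [norm_div, norm_pow, norm_mul, Complex.norm_real, mul_pow]
      simp [abs_pow, Real.norm_eq_abs, abs_pow, mul_div_assoc]
    rw [this]
    exact ((hmom_int n).abs).mul_const _
  have hnormval : ∀ n : ℕ, ∫ τ, ‖((τ : ℂ) * w) ^ n / (n.factorial : ℂ)‖ ∂ν
      = ‖w‖ ^ n / Real.Gamma (α * n + 1) := by
    intro n
    have h1 : ∫ τ, ‖((τ : ℂ) * w) ^ n / (n.factorial : ℂ)‖ ∂ν
        = ∫ τ, τ ^ n * (‖w‖ ^ n / (n.factorial : ℝ)) ∂ν := by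
      apply integral_congr_ae
      filter_upwards [hae] with τ hτ
      simp only [norm_div, norm_pow, norm_mul, Complex.norm_real, Real.norm_eq_abs,
        _root_.abs_of_nonneg hτ, Complex.norm_natCast, mul_pow]
      ring
    rw [h1, integral_mul_const, hmom n]
    have := (Nat.factorial_pos n)
    field_simp
  have hswap : ∫ τ, (∑' n : ℕ, ((τ : ℂ) * w) ^ n / (n.factorial : ℂ)) ∂ν
      = ∑' n : ℕ, ∫ τ, ((τ : ℂ) * w) ^ n / (n.factorial : ℂ) ∂ν := by
    apply integral_tsum
    · intro n
      apply Continuous.aestronglyMeasurable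
      continuity
    · have hlin : ∀ n : ℕ, ∫⁻ τ, ‖((τ : ℂ) * w) ^ n / (n.factorial : ℂ)‖ₑ ∂ν
          = ENNReal.ofReal (‖w‖ ^ n / Real.Gamma (α * n + 1)) := by
        intro n
        rw [← hnormval n]
        simp_rw [← ofReal_norm]
        exact (ofReal_integral_eq_lintegral_ofReal (hnormint n)
          (Filter.Eventually.of_forall fun τ => norm_nonneg _)).symm
      simp_rw [hlin]
      rw [← ENNReal.ofReal_tsum_of_nonneg
        (fun n => div_nonneg (pow_nonneg (norm_nonneg w) n) (hΓpos n).le)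
        (ml_summable_s8 hα₁ hα₂ ‖w‖ (norm_nonneg w))]
      exact ENNReal.ofReal_ne_top
  simp_rw [hexp]
  rw [hswap, mittagLeffler]
  exact (tsum_congr hterm).symm

/-- Positive semidefiniteness of the matrix `A_{ab} = E_α(∫ (e^{i(φ_a − φ_b)} − 1) dμ)`:
for all `z : Fin N → ℂ`, the sum `∑_{a,b} conj(z_a) z_b A_{ab}` is a nonnegative real
number (expressed via the partial order on `ℂ`: `0 ≤ w` iff `w` is real and nonnegative). -/
theorem fractional_poisson_characteristic_posdef
    (α : ℝ) (hα₁ : 0 < α) (hα₂ : α < 1)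
    (ν : Measure ℝ) [IsProbabilityMeasure ν] (hsupp : ν (Set.Iio 0) = 0)
    (hmom_int : ∀ n : ℕ, Integrable (fun τ : ℝ => τ ^ n) ν)
    (hmom : ∀ n : ℕ, ∫ τ, τ ^ n ∂ν = (Nat.factorial n : ℝ) / Real.Gamma (α * n + 1))
    {M : Type*} [MeasurableSpace M] (μ : Measure M)
    (N : ℕ) (φ : Fin N → M → ℝ) (hφ : ∀ a, Measurable (φ a))
    (hint : ∀ a b, Integrable
      (fun x => Complex.exp (Complex.I * ((φ a x : ℂ) - (φ b x : ℂ))) - 1) μ)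
    (z : Fin N → ℂ) :
    0 ≤ ∑ a, ∑ b, (starRingEnd ℂ) (z a) * z b *
      mittagLeffler α (∫ x, (Complex.exp (Complex.I * ((φ a x : ℂ) - (φ b x : ℂ))) - 1) ∂μ) := by
  classical
  rcases Nat.eq_zero_or_pos N with hN | hN
  · subst hN; simp
  set w : Fin N → Fin N → ℂ :=
    fun a b => ∫ x, (Complex.exp (Complex.I * ((φ a x : ℂ) - (φ b x : ℂ))) - 1) ∂μ with hw
  set a₀ : Fin N := ⟨0, hN⟩ with ha₀
  -- hermitian property
  have hherm : ∀ a b, (starRingEnd ℂ) (w a b) = w b a := by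
    intro a b
    rw [hw, ← integral_conj]
    apply integral_congr_ae
    filter_upwards with x
    simp only [map_sub, map_one, map_mul, Complex.conj_I, Complex.conj_ofReal,
      ← Complex.exp_conj]
    congr 2
    simp [Complex.conj_ofReal]
    ring
  -- real part nonpositive
  have hre : ∀ a b, (w a b).re ≤ 0 := by
    intro a b
    have h1 : (w a b).re = ∫ x, (Complex.exp (Complex.I * ((φ a x : ℂ) - (φ b x : ℂ))) - 1).re ∂μ :=
      (integral_re (hint a b)).symm
    rw [h1]
    apply integral_nonpos
    intro x
    have h2 : Complex.I * ((φ a x : ℂ) - (φ b x : ℂ)) = ((φ a x - φ b x : ℝ) : ℂ) * Complex.I := by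
      push_cast; ring
    simp only [Pi.zero_apply, Complex.sub_re, Complex.one_re, h2,
      Complex.exp_ofReal_mul_I_re]
    have := Real.cos_le_one (φ a x - φ b x)
    linarith
  -- a.e. nonnegativity of τ
  have hae : ∀ᵐ τ ∂ν, 0 ≤ τ := by
    rw [ae_iff]
    convert hsupp using 2
    ext τ; simp [Set.mem_Iio, not_le]
  -- the auxiliary functions  v
  set v : Fin N → M → ℂ :=
    fun a x => Complex.exp (-(Complex.I * (φ a x : ℂ))) - Complex.exp (-(Complex.I * (φ a₀ x : ℂ)))
    with hv
  have hident : ∀ a b, (fun x => (starRingEnd ℂ) (v a x) * v b x) = fun x =>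
      (Complex.exp (Complex.I * ((φ a x : ℂ) - (φ b x : ℂ))) - 1)
        - (Complex.exp (Complex.I * ((φ a₀ x : ℂ) - (φ b x : ℂ))) - 1)
        - (Complex.exp (Complex.I * ((φ a x : ℂ) - (φ a₀ x : ℂ))) - 1) := by
    intro a b
    funext x
    have hc : ∀ s : ℝ, (starRingEnd ℂ) (Complex.exp (-(Complex.I * (s : ℂ))))
        = Complex.exp (Complex.I * (s : ℂ)) := by
      intro s
      rw [← Complex.exp_conj]
      congr 1
      simp [Complex.conj_ofReal]
    have hm : ∀ s t : ℝ, Complex.exp (Complex.I * ((s : ℂ) - (t : ℂ)))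
        = Complex.exp (Complex.I * (s : ℂ)) * Complex.exp (-(Complex.I * (t : ℂ))) := by
      intro s t
      rw [← Complex.exp_add]
      congr 1
      ring
    have h0 : Complex.exp (Complex.I * (φ a₀ x : ℂ)) * Complex.exp (-(Complex.I * (φ a₀ x : ℂ)))
        = 1 := by rw [← Complex.exp_add]; simp
    simp only [hv]
    rw [map_sub, hc (φ a x), hc (φ a₀ x), hm (φ a x) (φ b x), hm (φ a₀ x) (φ b x),
      hm (φ a x) (φ a₀ x)]
    linear_combination h0
  have hvint : ∀ a b, Integrable (fun x => (starRingEnd ℂ) (v a x) * v b x) μ := by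
    intro a b
    rw [hident a b]
    exact ((hint a b).sub (hint a₀ b)).sub (hint a a₀)
  have hg : ∀ a b, (∫ x, (starRingEnd ℂ) (v a x) * v b x ∂μ) = w a b - w a₀ b - w a a₀ := by
    intro a b
    have hI1 : Integrable (fun x =>
        (Complex.exp (Complex.I * ((φ a x : ℂ) - (φ b x : ℂ))) - 1)
          - (Complex.exp (Complex.I * ((φ a₀ x : ℂ) - (φ b x : ℂ))) - 1)) μ :=
      (hint a b).sub (hint a₀ b)
    rw [hident a b, integral_sub hI1 (hint a a₀), integral_sub (hint a b) (hint a₀ b)]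
  -- fixed τ positivity (Schoenberg-type argument)
  have hfix : ∀ τ : ℝ, 0 ≤ τ →
      0 ≤ ∑ a, ∑ b, (starRingEnd ℂ) (z a) * z b * Complex.exp ((τ : ℂ) * w a b) := by
    intro τ hτ
    set zk : Fin N → ℂ := fun a => z a * Complex.exp ((τ : ℂ) * (starRingEnd ℂ) (w a a₀)) with hzk
    have hconjzk : ∀ a, (starRingEnd ℂ) (zk a)
        = (starRingEnd ℂ) (z a) * Complex.exp ((τ : ℂ) * w a a₀) := by
      intro a
      simp only [hzk, map_mul, ← Complex.exp_conj, Complex.conj_ofReal, RingHomCompTriple.comp_apply]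
      simp
    have hterm : ∀ a b, (starRingEnd ℂ) (z a) * z b * Complex.exp ((τ : ℂ) * w a b)
        = (starRingEnd ℂ) (zk a) * zk b
          * Complex.exp ((τ : ℂ) * (∫ x, (starRingEnd ℂ) (v a x) * v b x ∂μ)) := by
      intro a b
      have h1 : w a b = (∫ x, (starRingEnd ℂ) (v a x) * v b x ∂μ) + w a a₀ + (starRingEnd ℂ) (w b a₀) := by
        rw [hg a b, hherm b a₀]; ring
      rw [h1, hconjzk a, hzk]
      simp only [mul_add, Complex.exp_add]
      ring
    simp only [hterm]
    -- expand the exponential as a series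
    have hser : ∀ a b, (starRingEnd ℂ) (zk a) * zk b
          * Complex.exp ((τ : ℂ) * (∫ x, (starRingEnd ℂ) (v a x) * v b x ∂μ))
        = ∑' n : ℕ, ((τ ^ n / n.factorial : ℝ) : ℂ)
            * ((starRingEnd ℂ) (zk a) * zk b * (∫ x, (starRingEnd ℂ) (v a x) * v b x ∂μ) ^ n) := by
      intro a b
      rw [Complex.exp_eq_exp_ℂ, NormedSpace.exp_eq_tsum_div, ← tsum_mul_left]
      congr 1
      funext n
      rw [mul_pow]
      push_cast
      ring
    simp only [hser]
    have hsummable : ∀ p : Fin N × Fin N, Summable (fun n : ℕ =>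
        ((τ ^ n / n.factorial : ℝ) : ℂ)
          * ((starRingEnd ℂ) (zk p.1) * zk p.2 * (∫ x, (starRingEnd ℂ) (v p.1 x) * v p.2 x ∂μ) ^ n)) := by
      intro p
      apply Summable.congr
        ((NormedSpace.expSeries_div_summable
          ((τ : ℂ) * (∫ x, (starRingEnd ℂ) (v p.1 x) * v p.2 x ∂μ))).mul_left
          ((starRingEnd ℂ) (zk p.1) * zk p.2))
      intro n
      rw [mul_pow]
      push_cast
      ring
    rw [← Finset.sum_product', Finset.univ_product_univ]
    rw [← Summable.tsum_finsetSum (fun p _ => hsummable p)]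
    apply tsum_nonneg
    intro n
    have : ∑ p : Fin N × Fin N, ((τ ^ n / n.factorial : ℝ) : ℂ)
          * ((starRingEnd ℂ) (zk p.1) * zk p.2 * (∫ x, (starRingEnd ℂ) (v p.1 x) * v p.2 x ∂μ) ^ n)
        = ((τ ^ n / n.factorial : ℝ) : ℂ)
          * ∑ a, ∑ b, (starRingEnd ℂ) (zk a) * zk b * (∫ x, (starRingEnd ℂ) (v a x) * v b x ∂μ) ^ n := by
      rw [← Finset.univ_product_univ, Finset.sum_product]
      simp_rw [Finset.mul_sum]
    rw [this]
    exact mul_nonneg (Complex.zero_le_real.2 (by positivity)) (gram_pow_nonneg μ v hvint n zk)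
  -- integrability of the exponentials over ν
  have hexpint : ∀ a b, Integrable (fun τ : ℝ => Complex.exp ((τ : ℂ) * w a b)) ν := by
    intro a b
    refine Integrable.mono' (integrable_const 1) ?_ ?_
    · apply Continuous.aestronglyMeasurable; continuity
    · filter_upwards [hae] with τ hτ
      rw [Complex.norm_exp]
      have h1 : ((τ : ℂ) * w a b).re = τ * (w a b).re := by
        simp [Complex.mul_re]
      rw [h1]
      have h2 : τ * (w a b).re ≤ 0 := mul_nonpos_of_nonneg_of_nonpos hτ (hre a b)
      calc Real.exp (τ * (w a b).re) ≤ Real.exp 0 := Real.exp_le_exp.2 h2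
        _ = 1 := Real.exp_zero
  -- rewrite ML as integral and conclude
  have hml : ∀ a b, (starRingEnd ℂ) (z a) * z b * mittagLeffler α (w a b)
      = ∫ τ, (starRingEnd ℂ) (z a) * z b * Complex.exp ((τ : ℂ) * w a b) ∂ν := by
    intro a b
    rw [ml_integral_rep hα₁ hα₂ ν hsupp hmom_int hmom (w a b), integral_const_mul]
  calc ∑ a, ∑ b, (starRingEnd ℂ) (z a) * z b * mittagLeffler α (w a b)
      = ∑ a, ∑ b, ∫ τ, (starRingEnd ℂ) (z a) * z b * Complex.exp ((τ : ℂ) * w a b) ∂ν := by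
        exact Finset.sum_congr rfl fun a _ => Finset.sum_congr rfl fun b _ => hml a b
    _ = ∑ a, ∫ τ, ∑ b, (starRingEnd ℂ) (z a) * z b * Complex.exp ((τ : ℂ) * w a b) ∂ν :=
        Finset.sum_congr rfl fun a _ =>
          (integral_finset_sum _ fun b _ => (hexpint a b).const_mul _).symm
    _ = ∫ τ, ∑ a, ∑ b, (starRingEnd ℂ) (z a) * z b * Complex.exp ((τ : ℂ) * w a b) ∂ν :=
        (integral_finset_sum _ fun a _ =>
          integrable_finset_sum _ fun b _ => (hexpint a b).const_mul _).symm
    _ ≥ 0 := by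
        apply integral_nonneg_cplx
        · exact integrable_finset_sum _ fun a _ =>
            integrable_finset_sum _ fun b _ => (hexpint a b).const_mul _
        · filter_upwards [hae] with τ hτ
          exact hfix τ hτ
end

section
/- Let 0 < α < 1 and define Ψ : [0,∞) → ℝ by Ψ(σ) = E_α(−σ^α) (the real part of E_α evaluated at the nonpositive real −σ^α; the value is real). Then Ψ satisfies the Caputo fractional differential equation D^α Ψ(σ) = −Ψ(σ) for all σ > 0; explicitly, (1/Γ(1−α)) ∫_0^σ Ψ′(τ) (σ − τ)^{−α} dτ = −E_α(−σ^α), where Ψ′ denotes the derivative of Ψ. -/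
open MeasureTheory Complex

open Filter intervalIntegral

/-- The survival probability `Ψ(σ) = E_α(−σ^α)` (the value is real; we take the real
part of the Mittag-Leffler function at the nonpositive real `−σ^α`). -/
noncomputable def mlSurvival (α : ℝ) (σ : ℝ) : ℝ :=
  (mittagLeffler α (-((σ ^ α : ℝ) : ℂ))).re

-- Step 1: log-convexity bound
lemma gamma_ratio_le {α : ℝ} (hα₁ : 0 < α) (hα₂ : α < 1) {x : ℝ} (hx : 1 ≤ x) :
    Real.Gamma x * (x + α - 1) ^ α ≤ Real.Gamma (x + α) := by
  have h1 : (0:ℝ) < x + α - 1 := by linarith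
  have h2 : (0:ℝ) < x + α := by linarith
  have hG1 : 0 < Real.Gamma (x + α - 1) := Real.Gamma_pos_of_pos h1
  have hG2 : 0 < Real.Gamma (x + α) := Real.Gamma_pos_of_pos h2
  have hGx : 0 < Real.Gamma x := Real.Gamma_pos_of_pos (by linarith)
  have hc := Real.convexOn_log_Gamma.2 (Set.mem_Ioi.2 h1) (Set.mem_Ioi.2 h2)
      (le_of_lt hα₁) (by linarith : (0:ℝ) ≤ 1 - α) (by ring)
  have hxeq : α • (x + α - 1) + (1 - α) • (x + α) = x := by simp [smul_eq_mul]; ring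
  rw [hxeq] at hc
  simp only [Function.comp_apply, smul_eq_mul] at hc
  -- exponentiate
  have key : Real.Gamma x ≤ Real.Gamma (x + α - 1) ^ α * Real.Gamma (x + α) ^ (1 - α) := by
    have h := Real.exp_le_exp.2 hc
    rw [Real.exp_log hGx, Real.exp_add] at h
    rw [Real.rpow_def_of_pos hG1, Real.rpow_def_of_pos hG2, mul_comm (Real.log _) α,
      mul_comm (Real.log _) (1 - α)]
    exact h
  have hfun : Real.Gamma (x + α - 1) = Real.Gamma (x + α) / (x + α - 1) := by
    have := Real.Gamma_add_one (ne_of_gt h1)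
    rw [show x + α - 1 + 1 = x + α by ring] at this
    field_simp [this]
    exact this.symm
  rw [hfun, Real.div_rpow hG2.le h1.le] at key
  have hpow : Real.Gamma (x + α) ^ α * Real.Gamma (x + α) ^ (1 - α) = Real.Gamma (x + α) := by
    rw [← Real.rpow_add hG2]; simp
  have hp : (0:ℝ) < (x + α - 1) ^ α := Real.rpow_pos_of_pos h1 _
  calc Real.Gamma x * (x + α - 1) ^ α
      ≤ (Real.Gamma (x + α) ^ α / (x + α - 1) ^ α * Real.Gamma (x + α) ^ (1 - α)) * (x + α - 1) ^ α := by
        gcongr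
    _ = Real.Gamma (x + α) ^ α * Real.Gamma (x + α) ^ (1 - α) := by field_simp
    _ = Real.Gamma (x + α) := hpow

lemma summable_aux {α : ℝ} (hα₁ : 0 < α) (hα₂ : α < 1) (k : ℕ) {c r : ℝ}
    (hc : 0 < c) (hr : 0 < r) :
    Summable (fun n : ℕ => (n + 1 : ℝ) ^ k * r ^ n / Real.Gamma (α * n + c)) := by
  apply summable_of_ratio_norm_eventually_le (r := 1/2) (by norm_num)
  have hmul : Tendsto (fun n : ℕ => α * (n:ℝ)) atTop atTop :=
    (tendsto_natCast_atTop_atTop (R := ℝ)).const_mul_atTop hα₁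
  have hT : Tendsto (fun n : ℕ => (α * n + c + α - 1) ^ α) atTop atTop := by
    apply (tendsto_rpow_atTop hα₁).comp
    exact (tendsto_atTop_add_const_right _ (c + α - 1) hmul).congr (fun n => by ring)
  have hev2 : ∀ᶠ n : ℕ in atTop, (2:ℝ) ^ k * r * 2 ≤ (α * n + c + α - 1) ^ α :=
    hT.eventually_ge_atTop _
  have hev1 : ∀ᶠ n : ℕ in atTop, (1:ℝ) ≤ α * n + c := by
    exact (tendsto_atTop_add_const_right _ c hmul).eventually_ge_atTop _
  filter_upwards [hev1, hev2] with n h1 h2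
  have hx : (0:ℝ) < α * n + c := by positivity
  have hG1 : 0 < Real.Gamma (α * n + c) := Real.Gamma_pos_of_pos hx
  have hG2 : 0 < Real.Gamma (α * n + c + α) := Real.Gamma_pos_of_pos (by linarith)
  have hP : (0:ℝ) < (α * n + c + α - 1) ^ α := Real.rpow_pos_of_pos (by linarith) _
  have hratio := gamma_ratio_le hα₁ hα₂ h1
  have hcast : α * ((n:ℝ) + 1) + c = α * n + c + α := by ring
  rw [Real.norm_of_nonneg (by positivity), Real.norm_of_nonneg (by positivity)]
  push_cast
  rw [hcast]
  have key : ((n:ℝ) + 1 + 1) ^ k * (2 * r) ≤ ((n:ℝ) + 1) ^ k * (α * n + c + α - 1) ^ α := by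
    calc ((n:ℝ) + 1 + 1) ^ k * (2 * r) ≤ (2 * ((n:ℝ) + 1)) ^ k * (2 * r) := by
          apply mul_le_mul_of_nonneg_right _ (by positivity)
          exact pow_le_pow_left₀ (by positivity) (by linarith [Nat.cast_nonneg (α := ℝ) n]) k
      _ = ((n:ℝ) + 1) ^ k * (2 ^ k * r * 2) := by rw [mul_pow]; ring
      _ ≤ ((n:ℝ) + 1) ^ k * (α * n + c + α - 1) ^ α :=
          mul_le_mul_of_nonneg_left h2 (by positivity)
  have main : ((n:ℝ)+1+1)^k * r^(n+1) * (2 * Real.Gamma (α*n+c))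
      ≤ ((n:ℝ)+1)^k * r^n * Real.Gamma (α*n+c+α) := by
    calc ((n:ℝ)+1+1)^k * r^(n+1) * (2 * Real.Gamma (α*n+c))
        = (((n:ℝ)+1+1)^k * (2*r)) * (r^n * Real.Gamma (α*n+c)) := by ring
      _ ≤ (((n:ℝ)+1)^k * (α * n + c + α - 1) ^ α) * (r^n * Real.Gamma (α*n+c)) := by
          apply mul_le_mul_of_nonneg_right key (by positivity)
      _ = (((n:ℝ)+1)^k * r^n) * (Real.Gamma (α*n+c) * (α * n + c + α - 1) ^ α) := by ring
      _ ≤ (((n:ℝ)+1)^k * r^n) * Real.Gamma (α*n+c+α) := by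
          apply mul_le_mul_of_nonneg_left hratio (by positivity)
      _ = ((n:ℝ)+1)^k * r^n * Real.Gamma (α*n+c+α) := by ring
  rw [show (1:ℝ)/2 * (((n:ℝ)+1)^k * r^n / Real.Gamma (α*↑n+c))
      = ((n:ℝ)+1)^k * r^n / (2 * Real.Gamma (α*↑n+c)) from by ring]
  rw [div_le_div_iff₀ hG2 (by positivity)]
  calc ((n:ℝ)+1+1)^k * r^(n+1) * (2 * Real.Gamma (α*n+c)) ≤ _ := main
    _ = _ := by ring

/-- The real series form of `mlSurvival`. -/
noncomputable def mlF (α : ℝ) (σ : ℝ) : ℝ :=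
  ∑' n : ℕ, (-1) ^ n * σ ^ (α * n) / Real.Gamma (α * n + 1)

lemma summable_mlF {α : ℝ} (hα₁ : 0 < α) (hα₂ : α < 1) {σ : ℝ} (hσ : 0 ≤ σ) :
    Summable (fun n : ℕ => (-1 : ℝ) ^ n * σ ^ (α * n) / Real.Gamma (α * n + 1)) := by
  rcases eq_or_lt_of_le hσ with h | h
  · apply summable_of_ne_finset_zero (s := {0})
    intro n hn
    have hn' : n ≠ 0 := by simpa using hn
    have : (0:ℝ) ^ (α * n) = 0 := by
      rw [Real.zero_rpow]
      positivity
    simp [← h, this]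
  · apply Summable.of_norm
    have hsum := (summable_aux hα₁ hα₂ 0 one_pos (Real.rpow_pos_of_pos h α))
    apply hsum.of_nonneg_of_le (fun n => norm_nonneg _)
    intro n
    have hG : 0 < Real.Gamma (α * n + 1) := Real.Gamma_pos_of_pos (by positivity)
    rw [norm_div, norm_mul, norm_pow, norm_neg, norm_one, one_pow, one_mul,
      Real.norm_of_nonneg (Real.rpow_nonneg hσ _), Real.norm_of_nonneg hG.le]
    rw [show σ ^ (α * n) = (σ ^ α) ^ n by
      rw [Real.rpow_mul hσ, Real.rpow_natCast]]
    simp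

lemma mlSurvival_eq {α : ℝ} (hα₁ : 0 < α) (hα₂ : α < 1) {σ : ℝ} (hσ : 0 ≤ σ) :
    mlSurvival α σ = mlF α σ := by
  have hterm : ∀ n : ℕ, (-((σ ^ α : ℝ) : ℂ)) ^ n / (Real.Gamma (α * n + 1) : ℂ)
      = (((-1 : ℝ) ^ n * σ ^ (α * n) / Real.Gamma (α * n + 1) : ℝ) : ℂ) := by
    intro n
    have : σ ^ (α * n) = (σ ^ α) ^ n := by rw [Real.rpow_mul hσ, Real.rpow_natCast]
    rw [this]
    push_cast
    ring
  rw [mlSurvival, mittagLeffler]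
  rw [tsum_congr hterm, ← Complex.ofReal_tsum]
  rw [Complex.ofReal_re]
  rfl

/-- Derivative of the series. -/
lemma hasDerivAt_mlF {α : ℝ} (hα₁ : 0 < α) (hα₂ : α < 1) {τ : ℝ} (hτ : 0 < τ) :
    HasDerivAt (mlF α)
      (∑' n : ℕ, (-1) ^ n * (α * n) * τ ^ (α * n - 1) / Real.Gamma (α * n + 1)) τ := by
  set t : Set ℝ := Set.Ioo (τ/2) (τ+1) with ht
  have hτt : τ ∈ t := ⟨by linarith, by linarith⟩
  set u : ℕ → ℝ := fun n =>
    (2/τ) * α * ((n + 1 : ℝ) * ((τ+1) ^ α) ^ n / Real.Gamma (α * n + 1)) with hu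
  have hsu : Summable u := by
    apply Summable.mul_left
    have := summable_aux hα₁ hα₂ 1 (c := 1) (r := (τ+1)^α) one_pos (Real.rpow_pos_of_pos (by linarith) α)
    apply this.congr
    intro n
    rw [pow_one]
  set g : ℕ → ℝ → ℝ := fun n x => (-1) ^ n * x ^ (α * n) / Real.Gamma (α * n + 1) with hg
  set g' : ℕ → ℝ → ℝ := fun n x =>
    (-1) ^ n * (α * n) * x ^ (α * n - 1) / Real.Gamma (α * n + 1) with hg'
  have hderiv : ∀ n : ℕ, ∀ y ∈ t, HasDerivAt (g n) (g' n y) y := by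
    intro n y hy
    have hy0 : y ≠ 0 := by
      have : τ/2 < y := hy.1
      intro h; rw [h] at this; linarith
    have base : HasDerivAt (fun x : ℝ => (-1 : ℝ) ^ n / Real.Gamma (α * n + 1) * x ^ (α * n))
        ((-1 : ℝ) ^ n / Real.Gamma (α * n + 1) * (α * n * y ^ (α * n - 1))) y :=
      (Real.hasDerivAt_rpow_const (p := α * n) (Or.inl hy0)).const_mul
      ((-1 : ℝ) ^ n / Real.Gamma (α * n + 1))
    convert base using 1
    · funext x
      simp only [g]
      ring
    · simp only [g']
      ring
  have hbound : ∀ n : ℕ, ∀ y ∈ t, ‖g' n y‖ ≤ u n := by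
    intro n y hy
    have hy0 : 0 < y := lt_of_le_of_lt (by linarith : (0:ℝ) ≤ τ/2) hy.1
    have hG : 0 < Real.Gamma (α * n + 1) := Real.Gamma_pos_of_pos (by positivity)
    have h1 : y ^ (α * n - 1) = y ^ (α * n) / y := by
      rw [Real.rpow_sub hy0, Real.rpow_one]
    have h2 : y ^ (α * n) ≤ ((τ+1) ^ α) ^ n := by
      rw [show ((τ+1) ^ α) ^ n = (τ+1) ^ (α * n) by rw [Real.rpow_mul (by linarith), Real.rpow_natCast]]
      exact Real.rpow_le_rpow hy0.le (by linarith [hy.2]) (by positivity)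
    have h3 : y ^ (α * n) / y ≤ ((τ+1) ^ α) ^ n * (2/τ) := by
      rw [div_le_iff₀ hy0]
      calc y ^ (α * n) ≤ ((τ+1) ^ α) ^ n := h2
        _ = ((τ+1) ^ α) ^ n * (2/τ) * (τ/2) := by field_simp
        _ ≤ ((τ+1) ^ α) ^ n * (2/τ) * y := by
            apply mul_le_mul_of_nonneg_left hy.1.le (by positivity)
    rw [hg']
    simp only [norm_div, norm_mul, norm_pow, norm_neg, norm_one, one_pow, one_mul,
      Real.norm_of_nonneg (Real.rpow_nonneg hy0.le _), Real.norm_of_nonneg hG.le,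
      Real.norm_of_nonneg (mul_nonneg hα₁.le (Nat.cast_nonneg n))]
    rw [hu, h1]
    have hnum : α * n * (y ^ (α*n) / y) ≤ α * ((n:ℝ)+1) * (((τ+1) ^ α) ^ n * (2/τ)) :=
      mul_le_mul (mul_le_mul_of_nonneg_left (by linarith) hα₁.le) h3
        (by positivity) (by positivity)
    calc α * n * (y ^ (α*n) / y) / Real.Gamma (α * n + 1)
        ≤ α * ((n:ℝ)+1) * (((τ+1) ^ α) ^ n * (2/τ)) / Real.Gamma (α * n + 1) := by
          gcongr
      _ = (2/τ) * α * ((n + 1 : ℝ) * ((τ+1) ^ α) ^ n / Real.Gamma (α * n + 1)) := by ring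
  have hg0 : Summable fun n => g n τ := summable_mlF hα₁ hα₂ hτ.le
  have := hasDerivAt_tsum_of_isPreconnected hsu isOpen_Ioo (isPreconnected_Ioo)
    hderiv hbound hτt hg0 hτt
  exact this

lemma realBetaIntegrable {a b σ : ℝ} (ha : 0 < a) (hb : 0 < b) (hσ : 0 < σ) :
    IntervalIntegrable (fun x => x ^ (a-1) * (σ - x) ^ (b-1)) volume 0 σ := by
  have h1 : IntervalIntegrable (fun x : ℝ => x ^ (a-1) * (σ - x) ^ (b-1)) volume 0 (σ/2) := by
    apply IntervalIntegrable.mul_continuousOn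
    · exact intervalIntegral.intervalIntegrable_rpow' (by linarith)
    · apply ContinuousOn.rpow_const
      · exact (continuous_const.sub continuous_id).continuousOn
      · intro x hx
        rw [Set.uIcc_of_le (by linarith : (0:ℝ) ≤ σ/2)] at hx
        left
        intro h
        have := hx.2
        rw [sub_eq_zero] at h
        linarith [hx.2, h]
  have h2 : IntervalIntegrable (fun x : ℝ => x ^ (a-1) * (σ - x) ^ (b-1)) volume (σ/2) σ := by
    have base : IntervalIntegrable (fun x : ℝ => x ^ (b-1)) volume 0 (σ/2) :=
      intervalIntegral.intervalIntegrable_rpow' (by linarith)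
    have refl : IntervalIntegrable (fun x : ℝ => (σ - x) ^ (b-1)) volume (σ - 0) (σ - σ/2) :=
      IntervalIntegrable.comp_sub_left base σ
    have refl := refl.symm
    rw [show σ - σ/2 = σ/2 by ring, sub_zero] at refl
    have := refl.mul_continuousOn (g := fun x : ℝ => x ^ (a-1)) ?_
    · exact this.congr (fun x _ => mul_comm _ _)
    · apply ContinuousOn.rpow_const continuous_id.continuousOn
      intro x hx
      rw [Set.uIcc_of_le (by linarith : σ/2 ≤ σ)] at hx
      left
      intro h
      simp only [id_eq] at h
      rw [h] at hx
      linarith [hx.1]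
  exact h1.trans h2

lemma realBeta {a b σ : ℝ} (ha : 0 < a) (hb : 0 < b) (hσ : 0 < σ) :
    ∫ x in (0:ℝ)..σ, x ^ (a-1) * (σ - x) ^ (b-1)
      = Real.Gamma a * Real.Gamma b / Real.Gamma (a+b) * σ ^ (a+b-1) := by
  have hGab : 0 < Real.Gamma (a+b) := Real.Gamma_pos_of_pos (by linarith)
  have hofReal : ((∫ x in (0:ℝ)..σ, x ^ (a-1) * (σ - x) ^ (b-1) : ℝ) : ℂ)
      = ∫ x in (0:ℝ)..σ, (x:ℂ) ^ ((a:ℂ)-1) * ((σ:ℂ) - x) ^ ((b:ℂ)-1) := by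
    rw [← intervalIntegral.integral_ofReal]
    apply intervalIntegral.integral_congr
    intro x hx
    rw [Set.uIcc_of_le hσ.le] at hx
    push_cast
    rw [Complex.ofReal_cpow hx.1, Complex.ofReal_cpow (show (0:ℝ) ≤ σ - x by linarith [hx.2])]
    push_cast
    ring
  rw [Complex.betaIntegral_scaled (a:ℂ) (b:ℂ) hσ] at hofReal
  have hbeta : Complex.betaIntegral a b
      = ((Real.Gamma a * Real.Gamma b / Real.Gamma (a+b) : ℝ) : ℂ) := by
    have := Complex.Gamma_mul_Gamma_eq_betaIntegral
      (by simpa using ha : 0 < (a:ℂ).re) (by simpa using hb : 0 < (b:ℂ).re)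
    have hne : (Complex.Gamma ((a:ℂ) + (b:ℂ))) ≠ 0 := by
      rw [show ((a:ℂ) + b) = ((a+b:ℝ):ℂ) by push_cast; ring, Complex.Gamma_ofReal]
      exact_mod_cast hGab.ne'
    rw [show ((a:ℂ) + b) = ((a+b:ℝ):ℂ) from by push_cast; ring] at this hne
    rw [Complex.Gamma_ofReal] at hne
    have hb2 : Complex.betaIntegral a b
        = Complex.Gamma a * Complex.Gamma b / ((Real.Gamma (a+b) : ℝ) : ℂ) := by
      rw [this, Complex.Gamma_ofReal, mul_div_cancel_left₀ _ hne]
    rw [hb2, Complex.Gamma_ofReal, Complex.Gamma_ofReal]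
    push_cast
    ring
  rw [hbeta, show ((a:ℂ) + b - 1) = ((a+b-1:ℝ):ℂ) from by push_cast; ring,
    ← Complex.ofReal_cpow hσ.le, ← Complex.ofReal_mul] at hofReal
  have hfin : (∫ x in (0:ℝ)..σ, x ^ (a-1) * (σ - x) ^ (b-1))
      = σ ^ (a+b-1) * (Real.Gamma a * Real.Gamma b / Real.Gamma (a+b)) :=
    Complex.ofReal_injective hofReal
  rw [hfin]; ring

/-- For `0 < α < 1`, the function `Ψ(σ) = E_α(−σ^α)` satisfies the Caputo fractional
differential equation `D^α Ψ(σ) = −Ψ(σ)` for all `σ > 0`; explicitly,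
`(1/Γ(1−α)) ∫₀^σ Ψ'(τ) (σ−τ)^{−α} dτ = −E_α(−σ^α)`. -/
theorem mittagLeffler_caputo_equation (α : ℝ) (hα₁ : 0 < α) (hα₂ : α < 1)
    (σ : ℝ) (hσ : 0 < σ) :
    (1 / Real.Gamma (1 - α)) *
        ∫ τ in (0 : ℝ)..σ, deriv (mlSurvival α) τ * (σ - τ) ^ (-α) =
      -mlSurvival α σ := by
  have hΓ : 0 < Real.Gamma (1 - α) := Real.Gamma_pos_of_pos (by linarith)
  set F : ℕ → ℝ → ℝ := fun n τ =>
    ((-1) ^ n * (α * n) * τ ^ (α * n - 1) / Real.Gamma (α * n + 1)) * (σ - τ) ^ (-α) with hF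
  -- the n = 0 term vanishes
  have hF0 : F 0 = fun _ => 0 := by
    funext τ
    simp [hF]
  -- pointwise form with constant pulled out
  have hc'G : ∀ n : ℕ, 0 < Real.Gamma (α * n + 1) :=
    fun n => Real.Gamma_pos_of_pos (by positivity)
  have hFeq : ∀ (n : ℕ) (τ : ℝ), F n τ =
      ((-1) ^ n * (α * n) / Real.Gamma (α * n + 1)) * (τ ^ (α * n - 1) * (σ - τ) ^ (-α)) := by
    intro n τ; rw [hF]; ring
  -- integrability of the beta kernel for n ≥ 1
  have hbetaInt : ∀ n : ℕ, 0 < n →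
      IntegrableOn (fun τ : ℝ => τ ^ (α * n - 1) * (σ - τ) ^ (-α)) (Set.Ioc 0 σ) volume := by
    intro n hn
    have hpos : 0 < α * n := by positivity
    have h := realBetaIntegrable (a := α * n) (b := 1 - α) hpos (by linarith) hσ
    simp only [show (1:ℝ) - α - 1 = -α from by ring] at h
    exact (intervalIntegrable_iff_integrableOn_Ioc_of_le hσ.le).mp h
  have hInt : ∀ n : ℕ, IntegrableOn (F n) (Set.Ioc 0 σ) volume := by
    intro n
    match n with
    | 0 => rw [hF0]; exact integrableOn_zero
    | (m+1) =>
      have := ((hbetaInt (m+1) (Nat.succ_pos m)).const_mul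
        ((-1) ^ (m+1) * (α * ((m+1 : ℕ) : ℝ)) / Real.Gamma (α * ((m+1 : ℕ) : ℝ) + 1)))
      exact IntegrableOn.congr_fun this (fun τ _ => (hFeq (m+1) τ).symm) measurableSet_Ioc
  -- the beta integral values for n ≥ 1
  have hval : ∀ n : ℕ, 0 < n →
      (∫ τ in Set.Ioc (0:ℝ) σ, τ ^ (α * n - 1) * (σ - τ) ^ (-α))
        = Real.Gamma (α * n) * Real.Gamma (1 - α) / Real.Gamma (α * n + 1 - α)
            * σ ^ (α * n - α) := by
    intro n hn
    have hpos : 0 < α * n := by positivity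
    rw [← intervalIntegral.integral_of_le hσ.le]
    have h := realBeta (a := α * n) (b := 1 - α) hpos (by linarith) hσ
    rw [show α * (n:ℝ) + (1 - α) - 1 = α * n - α from by ring,
      show α * (n:ℝ) + (1 - α) = α * n + 1 - α from by ring,
      show (1:ℝ) - α - 1 = -α from by ring] at h
    exact h
  -- kernel nonnegative on Ioc
  have hker_nonneg : ∀ n : ℕ, ∀ τ ∈ Set.Ioc (0:ℝ) σ,
      0 ≤ τ ^ (α * n - 1) * (σ - τ) ^ (-α) := by
    intro n τ hτ
    have h1 : (0:ℝ) ≤ τ := hτ.1.le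
    have h2 : (0:ℝ) ≤ σ - τ := by linarith [hτ.2]
    positivity
  -- norm integrals
  have hnormint : ∀ n : ℕ, (∫ τ in Set.Ioc (0:ℝ) σ, ‖F n τ‖)
      = (α * n / Real.Gamma (α * n + 1)) * ∫ τ in Set.Ioc (0:ℝ) σ,
          τ ^ (α * n - 1) * (σ - τ) ^ (-α) := by
    intro n
    rw [← MeasureTheory.integral_const_mul]
    apply setIntegral_congr_fun measurableSet_Ioc
    intro τ hτ
    dsimp only
    rw [hFeq n τ, norm_mul, Real.norm_of_nonneg (hker_nonneg n τ hτ)]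
    congr 1
    rw [norm_div, norm_mul, norm_pow, norm_neg, norm_one, one_pow, one_mul,
      Real.norm_of_nonneg (by positivity : (0:ℝ) ≤ α * n),
      Real.norm_of_nonneg (hc'G n).le]
  -- summable bound
  set B : ℕ → ℝ := fun n =>
    (Real.Gamma (1 - α) * σ ^ (-α)) * ((σ ^ α) ^ n / Real.Gamma (α * n + (1 - α))) with hB
  have hBsum : Summable B := by
    apply Summable.mul_left
    have := summable_aux hα₁ hα₂ 0 (c := 1 - α) (r := σ ^ α)
      (by linarith) (Real.rpow_pos_of_pos hσ α)
    apply this.congr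
    intro n
    rw [pow_zero, one_mul]
  have hBnonneg : ∀ n : ℕ, 0 ≤ B n := by
    intro n
    have hΓn : (0:ℝ) < Real.Gamma (α * n + (1 - α)) := by
      apply Real.Gamma_pos_of_pos
      have : (0:ℝ) ≤ α * n := by positivity
      linarith
    simp only [hB]
    exact mul_nonneg (mul_nonneg hΓ.le (Real.rpow_nonneg hσ.le _))
      (div_nonneg (by positivity) hΓn.le)
  have hnorm_le : ∀ n : ℕ, (∫ τ in Set.Ioc (0:ℝ) σ, ‖F n τ‖) ≤ B n := by
    intro n
    match n with
    | 0 =>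
      have h0 : (∫ τ in Set.Ioc (0:ℝ) σ, ‖F 0 τ‖) = 0 := by rw [hF0]; simp
      rw [h0]
      exact hBnonneg 0
    | (m+1) =>
      set n := m + 1
      have hn : 0 < n := Nat.succ_pos m
      have hpos : 0 < α * n := by positivity
      rw [hnormint n, hval n hn]
      have hGa : Real.Gamma (α * n + 1) = α * n * Real.Gamma (α * n) := by
        rw [Real.Gamma_add_one hpos.ne']
      have hσpow : σ ^ (α * (n:ℝ) - α) = (σ ^ α) ^ n * σ ^ (-α) := by
        rw [show α * (n:ℝ) - α = α * n + (-α) from by ring, Real.rpow_add hσ]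
        congr 1
        rw [← Real.rpow_natCast (σ ^ α) n, ← Real.rpow_mul hσ.le]
        try ring_nf
      have hGpos : 0 < Real.Gamma (α * n) := Real.Gamma_pos_of_pos hpos
      have hGpos2 : 0 < Real.Gamma (α * n + 1 - α) :=
        Real.Gamma_pos_of_pos (by nlinarith)
      apply le_of_eq
      simp only [hB]
      rw [show α * (n:ℝ) + (1 - α) = α * n + 1 - α from by ring]
      rw [hGa, hσpow]
      field_simp
      try ring
  -- Summability of the integrals
  have hNorm : Summable (fun n : ℕ => ∫ τ in Set.Ioc (0:ℝ) σ, ‖F n τ‖) := by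
    apply hBsum.of_nonneg_of_le (fun n => integral_nonneg (fun τ => norm_nonneg _)) hnorm_le
  have hgsum : Summable (fun n : ℕ => ∫ τ in Set.Ioc (0:ℝ) σ, F n τ) := by
    apply Summable.of_norm
    apply hNorm.of_nonneg_of_le (fun n => norm_nonneg _)
    intro n
    exact norm_integral_le_integral_norm _
  -- Rewrite the LHS integral
  rw [intervalIntegral.integral_of_le hσ.le]
  have hcong : ∀ τ ∈ Set.Ioc (0:ℝ) σ,
      deriv (mlSurvival α) τ * (σ - τ) ^ (-α) = ∑' n, F n τ := by
    intro τ hτ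
    have heq : mlSurvival α =ᶠ[nhds τ] mlF α := by
      filter_upwards [Ioi_mem_nhds hτ.1] with x hx using mlSurvival_eq hα₁ hα₂ (le_of_lt hx)
    rw [heq.deriv_eq, (hasDerivAt_mlF hα₁ hα₂ hτ.1).deriv, ← tsum_mul_right]
  rw [setIntegral_congr_fun measurableSet_Ioc hcong]
  rw [← MeasureTheory.integral_tsum_of_summable_integral_norm hInt hNorm]
  -- compute the sum
  have hshift : ∀ n : ℕ, (∫ τ in Set.Ioc (0:ℝ) σ, F (n+1) τ)
      = -Real.Gamma (1 - α) * ((-1) ^ n * σ ^ (α * n) / Real.Gamma (α * n + 1)) := by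
    intro n
    have hn1 : (0:ℝ) < α * (n+1 : ℕ) := by positivity
    have : (∫ τ in Set.Ioc (0:ℝ) σ, F (n+1) τ)
        = ((-1) ^ (n+1) * (α * (n+1:ℕ)) / Real.Gamma (α * (n+1:ℕ) + 1)) *
          ∫ τ in Set.Ioc (0:ℝ) σ, τ ^ (α * (n+1:ℕ) - 1) * (σ - τ) ^ (-α) := by
      rw [← MeasureTheory.integral_const_mul]
      exact setIntegral_congr_fun measurableSet_Ioc (fun τ _ => hFeq (n+1) τ)
    rw [this, hval (n+1) (Nat.succ_pos n)]
    have hGa : Real.Gamma (α * (n+1:ℕ) + 1) = α * (n+1:ℕ) * Real.Gamma (α * (n+1:ℕ)) := by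
      rw [Real.Gamma_add_one hn1.ne']
    have hc1 : α * ((n+1:ℕ):ℝ) + 1 - α = α * n + 1 := by push_cast; ring
    have hc2 : α * ((n+1:ℕ):ℝ) - α = α * n := by push_cast; ring
    rw [hGa, hc1, hc2]
    have hGpos : 0 < Real.Gamma (α * (n+1:ℕ)) := Real.Gamma_pos_of_pos hn1
    have hGpos2 : 0 < Real.Gamma (α * (n:ℝ) + 1) := hc'G n
    field_simp
    push_cast
    ring
  rw [Summable.tsum_eq_zero_add hgsum]
  have hzero : (∫ τ in Set.Ioc (0:ℝ) σ, F 0 τ) = 0 := by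
    rw [hF0]; simp
  rw [hzero, zero_add]
  rw [tsum_congr hshift, tsum_mul_left]
  rw [mlSurvival_eq hα₁ hα₂ hσ.le, mlF]
  field_simp
end

section
/- Let (M, 𝓑) be a measurable space with a σ-finite measure μ, let p ≥ 1 be real, and let f : M → ℂ be measurable with ∫_M |f(x)|^p dμ(x) < ∞. Define the coherent state e_λ(f) : Γ₀ → ℂ by e_λ(f)(n, x) := ∏_{k=1}^n f(x_k) (with empty product 1 for n = 0). Then e_λ(f) ∈ L^p(λ_μ) and ∫_{Γ₀} |e_λ(f)|^p dλ_μ = exp( ∫_M |f(x)|^p dμ(x) ), i.e., ‖e_λ(f)‖_{L^p(λ_μ)}^p = exp(‖f‖_{L^p(μ)}^p). -/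
open MeasureTheory Complex
open scoped ENNReal

/-- The space of finite configurations, modeled as `Γ₀ := Σ (n : ℕ), (Fin n → M)`. -/
abbrev FinConf (M : Type*) := Σ n : ℕ, (Fin n → M)

/-- The Lebesgue–Poisson measure `λ_μ := ∑ₙ (1/n!) · ιₙ∗(μ^{⊗n})` on `Γ₀`. -/
noncomputable def lebesguePoisson {M : Type*} [MeasurableSpace M] (μ : Measure M)
    [SigmaFinite μ] : Measure (FinConf M) :=
  Measure.sum fun n : ℕ =>
    ((Nat.factorial n : ℝ≥0∞))⁻¹ • (Measure.pi fun _ : Fin n => μ).map (Sigma.mk n)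

/-- The (Lebesgue–Poisson) coherent state `e_λ(f)(n,x) := ∏ₖ f(xₖ)`. -/
noncomputable def coherentState {M : Type*} (f : M → ℂ) : FinConf M → ℂ :=
  fun p => ∏ k : Fin p.1, f (p.2 k)

section Aux

variable {α : Type*} {β : α → Type*} [∀ a, MeasurableSpace (β a)]

lemma my_measurable_sigma_mk (a : α) : Measurable (Sigma.mk a : β a → Σ a, β a) := by
  intro s hs
  exact (MeasurableSpace.measurableSet_iInf.mp hs) a

lemma my_measurable_sigma_elim {γ : Type*} [MeasurableSpace γ] {g : (Σ a, β a) → γ}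
    (h : ∀ a, Measurable fun x : β a => g ⟨a, x⟩) : Measurable g := by
  intro s hs
  exact MeasurableSpace.measurableSet_iInf.mpr fun a => h a hs

lemma my_lintegral_pi_prod {M : Type*} [MeasurableSpace M] (μ : Measure M) [SigmaFinite μ]
    {g : M → ℝ≥0∞} (hg : Measurable g) (n : ℕ) :
    ∫⁻ x : Fin n → M, ∏ k, g (x k) ∂(Measure.pi fun _ : Fin n => μ)
      = (∫⁻ x, g x ∂μ) ^ n := by
  induction n with
  | zero => simp
  | succ n ih =>
    have A := (measurePreserving_piFinSuccAbove (fun _ : Fin (n + 1) => μ) 0).symm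
    rw [← A.lintegral_comp_emb (MeasurableEquiv.measurableEmbedding _)]
    simp_rw [MeasurableEquiv.piFinSuccAbove_symm_apply, Fin.insertNthEquiv,
      Fin.prod_univ_succ, Fin.insertNth_zero]
    simp only [Fin.zero_succAbove, Function.comp_def, Fin.cons_zero, Fin.cons_succ,
      Equiv.coe_fn_mk, cast_eq]
    have hg2 : Measurable fun y : Fin n → M => ∏ j : Fin n, g (y j) :=
      Finset.measurable_prod _ fun j _ => hg.comp (measurable_pi_apply j)
    rw [lintegral_prod_mul hg.aemeasurable hg2.aemeasurable, ih, pow_succ, mul_comm]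

end Aux

/-- For `p ≥ 1` and `f` with `∫ |f|^p dμ < ∞`, the coherent state `e_λ(f)` belongs to
`L^p(λ_μ)` and `‖e_λ(f)‖_{L^p(λ_μ)}^p = exp(‖f‖_{L^p(μ)}^p)`. -/
theorem coherentState_memLp_lebesguePoisson
    {M : Type*} [MeasurableSpace M] (μ : Measure M) [SigmaFinite μ]
    (p : ℝ) (hp : 1 ≤ p)
    (f : M → ℂ) (hf : Measurable f) (hfint : Integrable (fun x => ‖f x‖ ^ p) μ) :
    MemLp (coherentState f) (ENNReal.ofReal p) (lebesguePoisson μ) ∧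
      ∫ γ, ‖coherentState f γ‖ ^ p ∂(lebesguePoisson μ) =
        Real.exp (∫ x, ‖f x‖ ^ p ∂μ) := by
  have hp0 : (0 : ℝ) < p := lt_of_lt_of_le one_pos hp
  set g : M → ℝ := fun x => ‖f x‖ ^ p with hgdef
  have hg0 : ∀ x, 0 ≤ g x := fun x => Real.rpow_nonneg (norm_nonneg _) p
  have hrpow_meas : Measurable fun t : ℝ => t ^ p :=
    (Real.continuous_rpow_const hp0.le).measurable
  have hgmeas : Measurable g := hrpow_meas.comp hf.norm
  set G : M → ℝ≥0∞ := fun x => ENNReal.ofReal (g x) with hGdef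
  have hGmeas : Measurable G := ENNReal.measurable_ofReal.comp hgmeas
  set r : ℝ := ∫ x, g x ∂μ with hrdef
  have hr0 : 0 ≤ r := integral_nonneg hg0
  have hc : ∫⁻ x, G x ∂μ = ENNReal.ofReal r :=
    (ofReal_integral_eq_lintegral_ofReal hfint (ae_of_all _ hg0)).symm
  -- pointwise identity
  have hofReal : ∀ γ : FinConf M,
      ENNReal.ofReal (‖coherentState f γ‖ ^ p) = ∏ k : Fin γ.1, G (γ.2 k) := by
    intro γ
    rw [coherentState, norm_prod, ← Real.finset_prod_rpow _ _ (fun i _ => norm_nonneg _),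
      ENNReal.ofReal_prod_of_nonneg (fun i _ => hg0 _)]
  -- measurability of the coherent state
  have hcs : Measurable (coherentState f) :=
    my_measurable_sigma_elim fun n =>
      show Measurable fun x : Fin n → M => ∏ k : Fin n, f (x k) from
        Finset.measurable_prod _ fun k _ => hf.comp (measurable_pi_apply k)
  have hGprod : Measurable fun γ : FinConf M => ∏ k : Fin γ.1, G (γ.2 k) :=
    my_measurable_sigma_elim fun n =>
      show Measurable fun x : Fin n → M => ∏ k : Fin n, G (x k) from
        Finset.measurable_prod _ fun k _ => hGmeas.comp (measurable_pi_apply k)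
  -- the key lintegral computation
  have key : ∫⁻ γ, ENNReal.ofReal (‖coherentState f γ‖ ^ p) ∂(lebesguePoisson μ)
      = ENNReal.ofReal (Real.exp r) := by
    simp_rw [hofReal]
    rw [lebesguePoisson, lintegral_sum_measure]
    have hterm : ∀ n : ℕ,
        ∫⁻ γ : FinConf M, (∏ k : Fin γ.1, G (γ.2 k))
            ∂(((Nat.factorial n : ℝ≥0∞))⁻¹ •
              (Measure.pi fun _ : Fin n => μ).map (Sigma.mk n))
          = ((Nat.factorial n : ℝ≥0∞))⁻¹ * ENNReal.ofReal r ^ n := by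
      intro n
      rw [lintegral_smul_measure, lintegral_map hGprod (my_measurable_sigma_mk n)]
      have h1 : ∫⁻ x : Fin n → M, ∏ k : Fin n, G (x k) ∂(Measure.pi fun _ : Fin n => μ)
          = ENNReal.ofReal r ^ n := by rw [my_lintegral_pi_prod μ hGmeas n, hc]
      exact congrArg (fun t => ((Nat.factorial n : ℝ≥0∞))⁻¹ * t) h1
    simp_rw [hterm]
    rw [Real.exp_eq_exp_ℝ, NormedSpace.exp_eq_tsum_div]
    rw [ENNReal.ofReal_tsum_of_nonneg
      (fun n => by positivity) (Real.summable_pow_div_factorial r)]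
    refine tsum_congr fun n => ?_
    rw [div_eq_mul_inv, ENNReal.ofReal_mul (by positivity), ENNReal.ofReal_pow hr0,
      ENNReal.ofReal_inv_of_pos (by positivity), ENNReal.ofReal_natCast, mul_comm]
  have hexp_lt : ENNReal.ofReal (Real.exp r) < ∞ := ENNReal.ofReal_lt_top
  constructor
  · refine ⟨hcs.aestronglyMeasurable, ?_⟩
    have hp_ne_zero : ENNReal.ofReal p ≠ 0 := by
      simp [ENNReal.ofReal_eq_zero, not_le, hp0]
    have hp_ne_top : ENNReal.ofReal p ≠ ∞ := ENNReal.ofReal_ne_top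
    rw [eLpNorm_eq_lintegral_rpow_enorm_toReal hp_ne_zero hp_ne_top]
    have htoReal : (ENNReal.ofReal p).toReal = p := ENNReal.toReal_ofReal hp0.le
    rw [htoReal]
    have hpt : ∀ γ : FinConf M,
        ‖coherentState f γ‖ₑ ^ p = ENNReal.ofReal (‖coherentState f γ‖ ^ p) := by
      intro γ
      rw [← ofReal_norm, ← ENNReal.ofReal_rpow_of_nonneg (norm_nonneg _) hp0.le]
    simp_rw [hpt, key]
    exact ENNReal.rpow_lt_top_of_nonneg (by positivity) hexp_lt.ne
  · have hnonneg : 0 ≤ᵐ[lebesguePoisson μ] fun γ => ‖coherentState f γ‖ ^ p :=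
      ae_of_all _ fun γ => Real.rpow_nonneg (norm_nonneg _) p
    have hmeas2 : AEMeasurable (fun γ => ‖coherentState f γ‖ ^ p) (lebesguePoisson μ) :=
      (hrpow_meas.comp hcs.norm).aemeasurable
    rw [integral_eq_lintegral_of_nonneg_ae hnonneg hmeas2.aestronglyMeasurable, key,
      ENNReal.toReal_ofReal (Real.exp_nonneg _)]
end
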